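/- arXiv:1511.08359 — 5 statements merged into one kernel-verified Lean document; each statement's English description precedes it below -/
import Mathlib

section
/- Let G be a locally compact Hausdorff topological group with left Haar measure μ and modular function Δ, let X be a complex Banach space, and let π : G → B(X) be a group homomorphism into the invertible bounded linear operators on X such that the map G × X → X, (g, x) ↦ π(g)x, is continuous and sup_{g ∈ G} ‖π(g)‖ < ∞. Let 𝒜 be a set of μ-integrable complex-valued functions on G such that: (a) there is a dense subset Γ ⊆ G with the property that for every g ∈ Γ and φ ∈ 𝒜 the function h ↦ Δ(g)·φ(h·g) again belongs to 𝒜; and (b) for every neighborhood V of the identity element 1 ∈ G there exists φ ∈ 𝒜 with essential support contained in V, φ ≥ 0 almost everywhere, and ∫_G φ dμ = 1. For φ ∈ L¹(G) define π(φ) ∈ B(X) by the Bochner integral π(φ)x = ∫_G φ(g)·π(g)x dμ(g). Then for every closed linear subspace Y ⊆ X one has: π(g)Y ⊆ Y for all g ∈ G if and only if π(φ)Y ⊆ Y for all φ ∈ 𝒜. -/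
open MeasureTheory ENNReal Topology
open scoped NNReal ComplexOrder

/-- Let `π` be a uniformly bounded continuous representation of a locally
compact group `G` on a complex Banach space `X`, let `Δ` be the modular function of the
left Haar measure `μ`, and let `𝒜` be a set of integrable functions which is invariant
under the (modular-weighted) right translations by a dense subset `Γ ⊆ G` and contains
approximate identities supported in arbitrarily small neighborhoods of `1`. Then a closed
subspace `Y ⊆ X` is invariant under all `π(g)`, `g ∈ G`, if and only if it is invariant
under all integrated operators `π(φ)`, `φ ∈ 𝒜`. -/
theorem statement0 {G : Type*} [Group G] [TopologicalSpace G] [IsTopologicalGroup G]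
    [LocallyCompactSpace G] [T2Space G] [MeasurableSpace G] [BorelSpace G]
    (μ : Measure G) [μ.IsHaarMeasure]
    (Δ : G → ℝ≥0) (hΔpos : ∀ g : G, 0 < Δ g)
    (hΔ : ∀ g : G, Measure.map (fun h => h * g) μ = ((Δ g)⁻¹ : ℝ≥0) • μ)
    {X : Type*} [NormedAddCommGroup X] [NormedSpace ℂ X] [CompleteSpace X]
    (π : G → X →L[ℂ] X)
    (hπ1 : π 1 = ContinuousLinearMap.id ℂ X)
    (hπmul : ∀ g h : G, π (g * h) = (π g).comp (π h))
    (hπcont : Continuous fun p : G × X => π p.1 p.2)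
    (hπbdd : ∃ Cb : ℝ, ∀ g : G, ‖π g‖ ≤ Cb)
    (𝒜 : Set (G → ℂ))
    (h𝒜int : ∀ φ ∈ 𝒜, Integrable φ μ)
    (Γ : Set G) (hΓ : Dense Γ)
    (h𝒜tr : ∀ g ∈ Γ, ∀ φ ∈ 𝒜, (fun h : G => ((Δ g : ℝ) : ℂ) * φ (h * g)) ∈ 𝒜)
    (h𝒜approx : ∀ V ∈ nhds (1 : G), ∃ φ ∈ 𝒜,
      (∀ᵐ h ∂μ, h ∉ V → φ h = 0) ∧ (∀ᵐ h ∂μ, 0 ≤ φ h) ∧ ∫ h, φ h ∂μ = 1)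
    (Y : Submodule ℂ X) (hY : IsClosed (Y : Set X)) :
    (∀ g : G, ∀ y ∈ Y, π g y ∈ Y) ↔
      (∀ φ ∈ 𝒜, ∀ y ∈ Y, (∫ g, φ g • π g y ∂μ) ∈ Y) := by
  classical
  obtain ⟨Cb, hCb⟩ := hπbdd
  have hcont : ∀ x : X, Continuous fun g : G => π g x := fun x =>
    hπcont.comp (continuous_id.prodMk continuous_const)
  have hπ1x : ∀ x : X, π 1 x = x := fun x => by rw [hπ1]; rfl
  -- a.e. strong measurability for compactly (essentially) supported densities
  have haesm : ∀ (φ : G → ℂ) (x : X) (K : Set G), IsCompact K →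
      AEStronglyMeasurable φ μ → (∀ᵐ h ∂μ, h ∉ K → φ h = 0) →
      AEStronglyMeasurable (fun h => φ h • π h x) μ := by
    intro φ x K hK hφm hφ0
    have hKm : MeasurableSet K := hK.measurableSet
    have h1 : AEStronglyMeasurable (fun h => φ h • π h x) (μ.restrict K) :=
      hφm.restrict.smul ((hcont x).continuousOn.aestronglyMeasurable_of_isCompact hK hKm)
    have h2 : AEStronglyMeasurable (K.indicator fun h => φ h • π h x) μ :=
      (aestronglyMeasurable_indicator_iff hKm).mpr h1
    refine h2.congr ?_
    filter_upwards [hφ0] with h hh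
    by_cases hmem : h ∈ K
    · simp [Set.indicator_of_mem hmem]
    · simp [Set.indicator_of_notMem hmem, hh hmem]
  -- integrability of the integrands
  have hint : ∀ (φ : G → ℂ), Integrable φ μ → ∀ (x : X) (K : Set G), IsCompact K →
      (∀ᵐ h ∂μ, h ∉ K → φ h = 0) → Integrable (fun h => φ h • π h x) μ := by
    intro φ hφ x K hK h0
    refine Integrable.mono' (hφ.norm.const_mul (Cb * ‖x‖))
      (haesm φ x K hK hφ.aestronglyMeasurable h0) ?_
    filter_upwards with h
    rw [norm_smul, mul_comm]
    exact mul_le_mul_of_nonneg_right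
      (((π h).le_opNorm x).trans (mul_le_mul_of_nonneg_right (hCb h) (norm_nonneg x)))
      (norm_nonneg _)
  -- integrals of Y-valued integrands lie in Y
  haveI : IsClosed (Y : Set X) := hY
  have memY : ∀ f : G → X, Integrable f μ → (∀ᵐ h ∂μ, f h ∈ Y) → (∫ h, f h ∂μ) ∈ Y := by
    intro f hf hfY
    set q : X →L[ℂ] X ⧸ Y :=
      Y.mkQ.mkContinuous 1 fun x => by
        simpa using Submodule.Quotient.norm_mk_le Y x
    have hq : ∀ x : X, q x = Submodule.Quotient.mk x := fun x => rfl
    have h0 : q (∫ h, f h ∂μ) = 0 := by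
      rw [← q.integral_comp_comm hf]
      have : ∀ᵐ h ∂μ, q (f h) = 0 := by
        filter_upwards [hfY] with h hh
        rw [hq, Submodule.Quotient.mk_eq_zero]
        exact hh
      rw [integral_congr_ae this, integral_zero]
    rwa [hq, Submodule.Quotient.mk_eq_zero] at h0
  -- the key change-of-variables identity
  have key : ∀ (g : G) (φ : G → ℂ) (x : X),
      ∫ h, (((Δ g : ℝ) : ℂ) * φ (h * g)) • π h x ∂μ
        = ∫ k, φ k • π k (π g⁻¹ x) ∂μ := by
    intro g φ x
    have hπhg : ∀ h : G, π h x = π (h * g) (π g⁻¹ x) := by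
      intro h
      rw [← ContinuousLinearMap.comp_apply, ← hπmul]
      simp
    have hemb : MeasurableEmbedding (fun h : G => h * g) :=
      (Homeomorph.mulRight g).measurableEmbedding
    have h1 : ∫ h, φ (h * g) • π (h * g) (π g⁻¹ x) ∂μ
        = ((Δ g)⁻¹ : ℝ≥0) • ∫ k, φ k • π k (π g⁻¹ x) ∂μ := by
      rw [← hemb.integral_map (g := fun k => φ k • π k (π g⁻¹ x)), hΔ g,
        integral_smul_nnreal_measure]
    calc ∫ h, (((Δ g : ℝ) : ℂ) * φ (h * g)) • π h x ∂μ
        = ∫ h, ((Δ g : ℝ) : ℂ) • (φ (h * g) • π (h * g) (π g⁻¹ x)) ∂μ := by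
          congr 1; ext h; rw [mul_smul, hπhg h]
      _ = ((Δ g : ℝ) : ℂ) • ∫ h, φ (h * g) • π (h * g) (π g⁻¹ x) ∂μ := integral_smul _ _
      _ = (Δ g : ℝ) • (((Δ g)⁻¹ : ℝ≥0) • ∫ k, φ k • π k (π g⁻¹ x) ∂μ) := by
          rw [h1, Complex.coe_smul]
      _ = ∫ k, φ k • π k (π g⁻¹ x) ∂μ := by
          rw [NNReal.smul_def, smul_smul]
          push_cast
          rw [mul_inv_cancel₀ (by exact_mod_cast (hΔpos g).ne'), one_smul]
  constructor
  · -- forward direction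
    intro hinv φ hφ y hy
    by_cases hI : Integrable (fun h => φ h • π h y) μ
    · exact memY _ hI (Filter.Eventually.of_forall fun h => Y.smul_mem _ (hinv h y hy))
    · rw [integral_undef hI]; exact Y.zero_mem
  · -- reverse direction
    intro H
    have step : ∀ g ∈ Γ, ∀ y ∈ Y, π g⁻¹ y ∈ Y := by
      intro g hg y hy
      suffices hcl : π g⁻¹ y ∈ closure (Y : Set X) by rwa [hY.closure_eq] at hcl
      rw [Metric.mem_closure_iff]
      intro ε hε
      set x := π g⁻¹ y with hx
      have htend : Filter.Tendsto (fun h : G => π h x) (𝓝 1) (𝓝 x) := by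
        have := (hcont x).tendsto 1
        rwa [hπ1x x] at this
      obtain ⟨K, hKcomp, hKnhds⟩ := exists_compact_mem_nhds (1 : G)
      have hV : {h : G | dist (π h x) x < ε / 2} ∩ K ∈ 𝓝 (1 : G) :=
        Filter.inter_mem (htend (Metric.ball_mem_nhds x (by positivity))) hKnhds
      obtain ⟨φ, hφA, hφsupp, hφpos, hφone⟩ := h𝒜approx _ hV
      have hφint : Integrable φ μ := h𝒜int φ hφA
      have hφK : ∀ᵐ h ∂μ, h ∉ K → φ h = 0 := by
        filter_upwards [hφsupp] with h hh hK'
        exact hh fun hmem => hK' hmem.2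
      -- the candidate element of Y
      have hzY : (∫ h, φ h • π h x ∂μ) ∈ Y := by
        have := H _ (h𝒜tr g hg φ hφA) y hy
        rwa [key g φ y] at this
      refine ⟨_, hzY, ?_⟩
      -- norm estimate
      have hxeq : x = ∫ h, φ h • x ∂μ := by
        rw [integral_smul_const, hφone, one_smul]
      have hnormφ : ∫ h, ‖φ h‖ ∂μ = 1 := by
        have hre : ∀ᵐ h ∂μ, ‖φ h‖ = (φ h).re := by
          filter_upwards [hφpos] with h hh
          obtain ⟨hre, him⟩ := Complex.nonneg_iff.mp hh
          have heq : φ h = ((φ h).re : ℂ) := Complex.ext rfl (by simpa using him.symm)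
          rw [heq]
          simp [Complex.norm_real, Real.norm_eq_abs, abs_of_nonneg hre]
        rw [integral_congr_ae hre]
        have h2 := integral_re hφint
        rw [hφone] at h2
        simpa using h2
      have hintx : Integrable (fun h => φ h • x) μ := hφint.smul_const x
      have hintπ : Integrable (fun h => φ h • π h x) μ := hint φ hφint x K hKcomp hφK
      have hdiff : ∫ h, φ h • (x - π h x) ∂μ = x - ∫ h, φ h • π h x ∂μ := by
        have hfun : (fun h => φ h • (x - π h x)) = fun h => φ h • x - φ h • π h x :=
          funext fun h => smul_sub _ _ _
        rw [hfun, integral_sub hintx hintπ, ← hxeq]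
      have hbound : ‖x - (∫ h, φ h • π h x ∂μ)‖ ≤ ε / 2 := by
        rw [← hdiff]
        calc ‖∫ h, φ h • (x - π h x) ∂μ‖
            ≤ ∫ h, ‖φ h • (x - π h x)‖ ∂μ := norm_integral_le_integral_norm _
          _ ≤ ∫ h, (ε / 2) * ‖φ h‖ ∂μ := by
              refine integral_mono_ae ((hintx.sub hintπ).norm.congr ?_)
                (hφint.norm.const_mul _) ?_
              · filter_upwards with h; simp [smul_sub]
              · filter_upwards [hφsupp] with h hh
                rw [norm_smul]
                by_cases hmem : h ∈ {h : G | dist (π h x) x < ε / 2} ∩ K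
                · rw [mul_comm]
                  apply mul_le_mul_of_nonneg_right _ (norm_nonneg _)
                  rw [← dist_eq_norm']
                  exact le_of_lt hmem.1
                · rw [hh hmem]; simp
          _ = ε / 2 := by rw [integral_const_mul, hnormφ, mul_one]
      rw [dist_eq_norm]
      exact lt_of_le_of_lt hbound (by linarith)
    -- extend from Γ⁻¹ to all of G by density and continuity
    intro g y hy
    have hC : IsClosed ((fun g : G => π g y) ⁻¹' (Y : Set X)) :=
      hY.preimage (hcont y)
    have hsub : (fun g : G => g⁻¹) '' Γ ⊆ (fun g : G => π g y) ⁻¹' (Y : Set X) := by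
      rintro _ ⟨g, hg, rfl⟩
      exact step g hg y hy
    have hdense : Dense ((fun g : G => g⁻¹) '' Γ) :=
      ((Homeomorph.inv G).surjective.denseRange).dense_image continuous_inv hΓ
    have hall : (Set.univ : Set G) ⊆ (fun g : G => π g y) ⁻¹' (Y : Set X) := by
      rw [← hC.closure_eq]
      intro a _
      exact closure_mono hsub (hdense a)
    exact hall (Set.mem_univ g)
end

section
/- Let G be a unimodular locally compact Hausdorff topological group with Haar measure μ, and let m : G → [0,∞] be a Borel pseudo-norm on G (m(x)=0 iff x=1; m(x⁻¹)=m(x); m(xy) ≤ C_m·max(m(x),m(y)); balls B(x,r) := {y : m(xy⁻¹) < r} satisfy 0 < μ(B(1,r)) < ∞ and μ(B(1,2r)) ≤ C_d·μ(B(1,r)) for all r > 0). Let C′ > 0 and M ∈ ℕ. Then there exists a constant C″ > 0, depending only on C′ and M, for which the following holds for every continuous function γ : G × G → 𝕋 (the unit circle in ℂ): if f ∈ L¹(G), f ≥ 0 a.e. with compact essential support, α > 0, and (z_i)_{i≥1} in G and (r_i)_{i≥1} in (0,∞) are sequences satisfying (i) f ≤ α a.e. on G ∖ ⋃_i B(z_i,r_i),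 (ii) (1/μ(B(z_i,r_i)))·∫_{B(z_i,r_i)} f dμ ≤ C′α for all i, (iii) Σ_i μ(B(z_i,r_i)) ≤ (C′/α)·‖f‖_{L¹}, and (iv) every point of G lies in at most M of the balls B(z_i,r_i), then there exist functions g, b₁, b₂, … ∈ L¹(G) such that: (1) f = g + Σ_{i≥1} b_i almost everywhere on G; (2) |g| ≤ C″·α almost everywhere; (3) ‖g‖_{L¹} ≤ C″·‖f‖_{L¹}; (4) the essential support of b_i is contained in B(z_i,r_i) for every i; (5) ∫_G b_i(z)·γ(z_i, z⁻¹) dμ(z) = 0 for every i; (6) Σ_{i≥1} ‖b_i‖_{L¹} ≤ C″·‖f‖_{L¹}. -/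
open MeasureTheory ENNReal Topology

/-- The ball of radius `r` around `x` for the right-invariant pseudo-distance
`(x, y) ↦ m (x * y⁻¹)` associated to a pseudo-norm `m`. -/
def mball {G : Type*} [Group G] (m : G → ℝ≥0∞) (x : G) (r : ℝ≥0∞) : Set G :=
  {y : G | m (x * y⁻¹) < r}

/-- Twisted Calderón–Zygmund decomposition: given the output of the
covering lemma (with constants `C'`, `M`), there is `C'' > 0` depending only on `C'` and
`M` such that for every continuous unimodular function `γ : G × G → 𝕋` and every a.e.
nonnegative integrable `f` with compact essential support one can write `f = g + Σᵢ bᵢ`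
with `|g| ≤ C''·α` a.e., `‖g‖₁ ≤ C''·‖f‖₁`, each `bᵢ` essentially supported in
`B(zᵢ, rᵢ)` with twisted mean zero `∫ bᵢ(z)·γ(zᵢ, z⁻¹) dμ(z) = 0`, and
`Σᵢ ‖bᵢ‖₁ ≤ C''·‖f‖₁`. -/
theorem statement2 {G : Type*} [Group G] [TopologicalSpace G] [IsTopologicalGroup G]
    [LocallyCompactSpace G] [T2Space G] [MeasurableSpace G] [BorelSpace G]
    (μ : Measure G) [μ.IsHaarMeasure] [μ.IsMulRightInvariant]
    (m : G → ℝ≥0∞) (hmeas : Measurable m)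
    (h0 : ∀ x : G, m x = 0 ↔ x = 1)
    (hsymm : ∀ x : G, m x⁻¹ = m x)
    (Cm : ℝ) (hCm : 1 ≤ Cm)
    (hmul : ∀ x y : G, m (x * y) ≤ ENNReal.ofReal Cm * max (m x) (m y))
    (hfin : ∀ r : ℝ, 0 < r →
      0 < μ (mball m 1 (ENNReal.ofReal r)) ∧ μ (mball m 1 (ENNReal.ofReal r)) < ⊤)
    (Cd : ℝ) (hCd : 0 < Cd)
    (hdouble : ∀ r : ℝ, 0 < r →
      μ (mball m 1 (ENNReal.ofReal (2 * r))) ≤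
        ENNReal.ofReal Cd * μ (mball m 1 (ENNReal.ofReal r)))
    (C' : ℝ) (hC' : 0 < C') (M : ℕ) :
    ∃ C'' : ℝ, 0 < C'' ∧
      ∀ γ : G × G → ℂ, Continuous γ → (∀ p : G × G, ‖γ p‖ = 1) →
      ∀ f : G → ℝ, Integrable f μ → 0 ≤ᵐ[μ] f →
        (∃ K : Set G, IsCompact K ∧ ∀ᵐ x ∂μ, x ∉ K → f x = 0) →
      ∀ α : ℝ, 0 < α →
      ∀ (z : ℕ → G) (r : ℕ → ℝ), (∀ i : ℕ, 0 < r i) →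
        (∀ᵐ x ∂μ, x ∉ (⋃ i : ℕ, mball m (z i) (ENNReal.ofReal (r i))) → f x ≤ α) →
        (∀ i : ℕ, ∫ x in mball m (z i) (ENNReal.ofReal (r i)), f x ∂μ ≤
          C' * α * (μ (mball m (z i) (ENNReal.ofReal (r i)))).toReal) →
        (∑' i : ℕ, μ (mball m (z i) (ENNReal.ofReal (r i))) ≤
          ENNReal.ofReal ((C' / α) * ∫ x, f x ∂μ)) →
        (∀ x : G, {i : ℕ | x ∈ mball m (z i) (ENNReal.ofReal (r i))}.encard ≤ (M : ℕ∞)) →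
      ∃ (g : G → ℂ) (b : ℕ → G → ℂ),
        Integrable g μ ∧ (∀ i : ℕ, Integrable (b i) μ) ∧
        (∀ᵐ x ∂μ, (f x : ℂ) = g x + ∑' i : ℕ, b i x) ∧
        (∀ᵐ x ∂μ, ‖g x‖ ≤ C'' * α) ∧
        (∫ x, ‖g x‖ ∂μ ≤ C'' * ∫ x, |f x| ∂μ) ∧
        (∀ i : ℕ, ∀ᵐ x ∂μ, x ∉ mball m (z i) (ENNReal.ofReal (r i)) → b i x = 0) ∧
        (∀ i : ℕ, ∫ x, b i x * γ (z i, x⁻¹) ∂μ = 0) ∧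
        (∑' i : ℕ, ∫⁻ x, ‖b i x‖₊ ∂μ ≤ ENNReal.ofReal (C'' * ∫ x, |f x| ∂μ)) := by
  classical
  refine ⟨C' ^ 2 + M * C' + 2, by positivity, ?_⟩
  set C'' : ℝ := C' ^ 2 + M * C' + 2 with hC''def
  intro γ hγc hγn f hf hf0 _hsupp α hα z r hr h1 h2 h3 h4
  set B : ℕ → Set G := fun i => mball m (z i) (ENNReal.ofReal (r i)) with hBdef
  have hBmeas : ∀ i, MeasurableSet (B i) := by
    intro i
    have hm2 : Measurable fun y : G => m (z i * y⁻¹) :=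
      hmeas.comp (continuous_const.mul continuous_inv).measurable
    exact hm2 measurableSet_Iio
  have hBvol : ∀ i, 0 < μ (B i) ∧ μ (B i) < ⊤ := by
    intro i
    have hset : B i = (· * (z i)⁻¹) ⁻¹' (mball m 1 (ENNReal.ofReal (r i))) := by
      ext y
      simp only [hBdef, mball, Set.mem_setOf_eq, Set.mem_preimage, one_mul, mul_inv_rev,
        inv_inv]
    rw [hset, measure_preimage_mul_right]
    exact hfin (r i) (hr i)
  have hVpos : ∀ i, 0 < (μ (B i)).toReal := fun i =>
    ENNReal.toReal_pos (hBvol i).1.ne' (hBvol i).2.ne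
  set E : ℕ → Set G := disjointed B with hEdef
  have hEmeas : ∀ i, MeasurableSet (E i) := fun i => MeasurableSet.disjointed hBmeas i
  have hEsub : ∀ i, E i ⊆ B i := disjointed_subset B
  have hEdisj : Pairwise (Function.onFun Disjoint E) := disjoint_disjointed B
  have hEunion : ⋃ i, E i = ⋃ i, B i := iUnion_disjointed
  -- continuity of twisted characters
  have hcont : ∀ i, Continuous fun x : G => γ (z i, x⁻¹) := fun i =>
    hγc.comp (continuous_const.prodMk continuous_inv)
  have hfi : Integrable (fun x => (f x : ℂ)) μ := hf.ofReal
  have hfγ : ∀ i, Integrable (fun x => (f x : ℂ) * γ (z i, x⁻¹)) μ := by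
    intro i
    have h := hfi.bdd_mul (hcont i).aestronglyMeasurable (c := 1) (Filter.Eventually.of_forall fun x => le_of_eq (hγn _))
    exact h.congr (Filter.Eventually.of_forall fun x => mul_comm _ _)
  set c : ℕ → ℂ := fun i =>
    (∫ x in E i, (f x : ℂ) * γ (z i, x⁻¹) ∂μ) / ((μ (B i)).toReal : ℂ) with hcdef
  have hf0abs : ∀ᵐ x ∂μ, |f x| = f x := hf0.mono fun x hx => abs_of_nonneg hx
  have hintabs : ∫ x, |f x| ∂μ = ∫ x, f x ∂μ := integral_congr_ae hf0abs
  have habsnn : 0 ≤ ∫ x, |f x| ∂μ := integral_nonneg fun x => abs_nonneg _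
  -- bound on the constants c i
  have hc : ∀ i, ‖c i‖ ≤ C' * α := by
    intro i
    have hnorm1 : ‖∫ x in E i, (f x : ℂ) * γ (z i, x⁻¹) ∂μ‖ ≤
        ∫ x in E i, ‖(f x : ℂ) * γ (z i, x⁻¹)‖ ∂μ := norm_integral_le_integral_norm _
    have hnorm2 : ∫ x in E i, ‖(f x : ℂ) * γ (z i, x⁻¹)‖ ∂μ = ∫ x in E i, |f x| ∂μ := by
      refine integral_congr_ae (Filter.Eventually.of_forall fun x => ?_)
      simp [hγn (z i, x⁻¹)]
    have hnorm3 : ∫ x in E i, |f x| ∂μ = ∫ x in E i, f x ∂μ :=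
      integral_congr_ae (ae_restrict_of_ae hf0abs)
    have hnorm4 : ∫ x in E i, f x ∂μ ≤ ∫ x in B i, f x ∂μ :=
      setIntegral_mono_set hf.integrableOn (ae_restrict_of_ae hf0)
        (HasSubset.Subset.eventuallyLE (hEsub i))
    have hIle : ‖∫ x in E i, (f x : ℂ) * γ (z i, x⁻¹) ∂μ‖ ≤
        C' * α * (μ (B i)).toReal := by
      calc ‖∫ x in E i, (f x : ℂ) * γ (z i, x⁻¹) ∂μ‖
          ≤ ∫ x in E i, ‖(f x : ℂ) * γ (z i, x⁻¹)‖ ∂μ := hnorm1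
        _ = ∫ x in E i, f x ∂μ := by rw [hnorm2, hnorm3]
        _ ≤ ∫ x in B i, f x ∂μ := hnorm4
        _ ≤ C' * α * (μ (B i)).toReal := h2 i
    have : ‖c i‖ = ‖∫ x in E i, (f x : ℂ) * γ (z i, x⁻¹) ∂μ‖ / (μ (B i)).toReal := by
      rw [hcdef]
      simp [norm_div, abs_of_nonneg (hVpos i).le]
    rw [this, div_le_iff₀ (hVpos i)]
    exact hIle
  -- the bad parts
  set b : ℕ → G → ℂ := fun i x =>
    (E i).indicator (fun y => (f y : ℂ)) x -
      (B i).indicator (fun y => c i * (starRingEnd ℂ) (γ (z i, y⁻¹))) x with hbdef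
  have hb2cont : ∀ i, Continuous fun y : G => c i * (starRingEnd ℂ) (γ (z i, y⁻¹)) :=
    fun i => continuous_const.mul (Complex.continuous_conj.comp (hcont i))
  have hb2int : ∀ i, Integrable
      ((B i).indicator (fun y => c i * (starRingEnd ℂ) (γ (z i, y⁻¹)))) μ := by
    intro i
    rw [integrable_indicator_iff (hBmeas i)]
    refine Measure.integrableOn_of_bounded (hBvol i).2.ne
      (hb2cont i).aestronglyMeasurable (M := ‖c i‖) ?_
    refine Filter.Eventually.of_forall fun x => ?_
    simp [hγn (z i, x⁻¹)]
  have hbint : ∀ i, Integrable (b i) μ := fun i =>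
    (hfi.indicator (hEmeas i)).sub (hb2int i)
  have hbsupp : ∀ i x, x ∉ B i → b i x = 0 := by
    intro i x hx
    have hxE : x ∉ E i := fun h => hx (hEsub i h)
    simp [hbdef, Set.indicator_of_notMem hx, Set.indicator_of_notMem hxE]
  -- finite overlap
  have hS : ∀ x : G, {i : ℕ | x ∈ B i}.Finite := by
    intro x
    refine Set.encard_ne_top_iff.1 (ne_top_of_le_ne_top ?_ (h4 x))
    exact (ENat.coe_lt_top M).ne
  have hScard : ∀ x : G, ((hS x).toFinset).card ≤ M := by
    intro x
    have h := h4 x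
    rw [Set.Finite.encard_eq_coe_toFinset_card (hS x)] at h
    exact_mod_cast h
  have hbz : ∀ x : G, ∀ i ∉ (hS x).toFinset, b i x = 0 := by
    intro x i hi
    exact hbsupp i x (fun h => hi ((hS x).mem_toFinset.2 h))
  have hsummable : ∀ x : G, Summable fun i => b i x := fun x =>
    summable_of_ne_finset_zero (hbz x)
  have htsum : ∀ x : G, ∑' i, b i x = ∑ i ∈ (hS x).toFinset, b i x := fun x =>
    tsum_eq_sum (hbz x)
  -- the good part
  set g : G → ℂ := fun x => (f x : ℂ) - ∑' i, b i x with hgdef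
  -- off the union, g = f
  have hgoff : ∀ x, x ∉ (⋃ i, B i) → g x = (f x : ℂ) := by
    intro x hx
    have : ∑' i, b i x = 0 := by
      rw [htsum x]
      exact Finset.sum_eq_zero fun i _ => hbsupp i x fun h => hx (Set.mem_iUnion.2 ⟨i, h⟩)
    simp [hgdef, this]
  -- on the union, g is the sum of the constants
  have hgon : ∀ x ∈ ⋃ i, B i, g x = ∑ i ∈ (hS x).toFinset,
      (B i).indicator (fun y => c i * (starRingEnd ℂ) (γ (z i, y⁻¹))) x := by
    intro x hx
    have hx' : x ∈ ⋃ i, E i := by rw [hEunion]; exact hx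
    obtain ⟨i₀, hi₀⟩ := Set.mem_iUnion.1 hx'
    have hi₀mem : i₀ ∈ (hS x).toFinset := (hS x).mem_toFinset.2 (hEsub i₀ hi₀)
    have hEsum : ∑ i ∈ (hS x).toFinset, (E i).indicator (fun y => (f y : ℂ)) x
        = (f x : ℂ) := by
      rw [Finset.sum_eq_single i₀]
      · exact Set.indicator_of_mem hi₀ _
      · intro j _ hji
        refine Set.indicator_of_notMem (fun hjx => ?_) _
        exact Set.disjoint_left.1 (hEdisj hji) hjx hi₀
      · intro h; exact absurd hi₀mem h
    rw [hgdef]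
    simp only
    rw [htsum x, Finset.sum_sub_distrib, hEsum]
    ring
  -- pointwise bound for g on the union
  have hgbound : ∀ x ∈ ⋃ i, B i, ‖g x‖ ≤ M * (C' * α) := by
    intro x hx
    rw [hgon x hx]
    calc ‖∑ i ∈ (hS x).toFinset,
        (B i).indicator (fun y => c i * (starRingEnd ℂ) (γ (z i, y⁻¹))) x‖
        ≤ ∑ i ∈ (hS x).toFinset,
          ‖(B i).indicator (fun y => c i * (starRingEnd ℂ) (γ (z i, y⁻¹))) x‖ :=
            norm_sum_le _ _
      _ ≤ ∑ _i ∈ (hS x).toFinset, (C' * α) := by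
          refine Finset.sum_le_sum fun i _ => ?_
          by_cases hxB : x ∈ B i
          · rw [Set.indicator_of_mem hxB]
            calc ‖c i * (starRingEnd ℂ) (γ (z i, x⁻¹))‖
                = ‖c i‖ := by simp [hγn (z i, x⁻¹)]
              _ ≤ C' * α := hc i
          · rw [Set.indicator_of_notMem hxB]
            simpa using le_of_lt (by positivity : (0:ℝ) < C' * α)
      _ = ((hS x).toFinset.card : ℝ) * (C' * α) := by
          rw [Finset.sum_const, nsmul_eq_mul]
      _ ≤ M * (C' * α) := by
          have h5 := hScard x
          have : ((hS x).toFinset.card : ℝ) ≤ (M : ℝ) := by exact_mod_cast h5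
          have hca : (0:ℝ) ≤ C' * α := by positivity
          exact mul_le_mul_of_nonneg_right this hca
  -- conclusion (2)
  have hgae : ∀ᵐ x ∂μ, ‖g x‖ ≤ C'' * α := by
    filter_upwards [h1, hf0] with x hx1 hx0
    by_cases hx : x ∈ ⋃ i, B i
    · calc ‖g x‖ ≤ M * (C' * α) := hgbound x hx
        _ ≤ C'' * α := by rw [hC''def]; nlinarith [sq_nonneg C']
    · rw [hgoff x hx]
      have : ‖((f x : ℝ) : ℂ)‖ = f x := by
        rw [Complex.norm_real, Real.norm_eq_abs, abs_of_nonneg hx0]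
      rw [this]
      calc f x ≤ α := hx1 hx
        _ ≤ C'' * α := by rw [hC''def]; nlinarith [sq_nonneg C', mul_nonneg (Nat.cast_nonneg (α := ℝ) M) hC'.le]
  -- conjugate times value is one
  have hconjmul : ∀ p : G × G, (starRingEnd ℂ) (γ p) * γ p = 1 := by
    intro p
    have habs : ‖γ p‖ = 1 := hγn p
    rw [mul_comm, Complex.mul_conj, Complex.normSq_eq_norm_sq, habs]
    norm_num
  -- pointwise identity for the twisted integrand
  have hbmul : ∀ i x, b i x * γ (z i, x⁻¹) =
      (E i).indicator (fun y => (f y : ℂ) * γ (z i, y⁻¹)) x -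
      (B i).indicator (fun _ => c i) x := by
    intro i x
    simp only [hbdef, sub_mul]
    congr 1
    · by_cases hx : x ∈ E i
      · rw [Set.indicator_of_mem hx, Set.indicator_of_mem hx]
      · rw [Set.indicator_of_notMem hx, Set.indicator_of_notMem hx, zero_mul]
    · by_cases hx : x ∈ B i
      · rw [Set.indicator_of_mem hx, Set.indicator_of_mem hx, mul_assoc,
          hconjmul (z i, x⁻¹), mul_one]
      · rw [Set.indicator_of_notMem hx, Set.indicator_of_notMem hx, zero_mul]
  -- conclusion (5): twisted mean zero
  have hmean : ∀ i, ∫ x, b i x * γ (z i, x⁻¹) ∂μ = 0 := by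
    intro i
    have hE1 : Integrable ((E i).indicator (fun y => (f y : ℂ) * γ (z i, y⁻¹))) μ :=
      (hfγ i).indicator (hEmeas i)
    have hE2 : Integrable ((B i).indicator (fun _ => c i)) μ := by
      rw [integrable_indicator_iff (hBmeas i)]
      exact integrableOn_const (hBvol i).2.ne
    calc ∫ x, b i x * γ (z i, x⁻¹) ∂μ
        = ∫ x, ((E i).indicator (fun y => (f y : ℂ) * γ (z i, y⁻¹)) x -
            (B i).indicator (fun _ => c i) x) ∂μ :=
          integral_congr_ae (Filter.Eventually.of_forall fun x => hbmul i x)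
      _ = (∫ x, (E i).indicator (fun y => (f y : ℂ) * γ (z i, y⁻¹)) x ∂μ) -
            ∫ x, (B i).indicator (fun _ => c i) x ∂μ := integral_sub hE1 hE2
      _ = (∫ x in E i, (f x : ℂ) * γ (z i, x⁻¹) ∂μ) - (μ (B i)).toReal • c i := by
          rw [integral_indicator (hEmeas i), integral_indicator_const (c i) (hBmeas i), measureReal_def]
      _ = 0 := by
          rw [hcdef]
          have hvne : ((μ (B i)).toReal : ℂ) ≠ 0 := by
            exact_mod_cast (hVpos i).ne'
          rw [Complex.real_smul]
          field_simp
          simp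
  -- lintegral bound for each bad part
  have hbnorm : ∀ i, ∫⁻ x, ‖b i x‖₊ ∂μ ≤
      (∫⁻ x in E i, (‖f x‖₊ : ℝ≥0∞) ∂μ) + ENNReal.ofReal (C' * α) * μ (B i) := by
    intro i
    have hpt : ∀ x, (‖b i x‖₊ : ℝ≥0∞) ≤
        (E i).indicator (fun y => (‖f y‖₊ : ℝ≥0∞)) x +
        (B i).indicator (fun _ => ENNReal.ofReal (C' * α)) x := by
      intro x
      have h1' : ‖b i x‖₊ ≤ ‖(E i).indicator (fun y => (f y : ℂ)) x‖₊ +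
          ‖(B i).indicator (fun y => c i * (starRingEnd ℂ) (γ (z i, y⁻¹))) x‖₊ := by
        simp only [hbdef]
        exact nnnorm_sub_le _ _
      have h2' : (‖b i x‖₊ : ℝ≥0∞) ≤ (‖(E i).indicator (fun y => (f y : ℂ)) x‖₊ : ℝ≥0∞) +
          (‖(B i).indicator (fun y => c i * (starRingEnd ℂ) (γ (z i, y⁻¹))) x‖₊ : ℝ≥0∞) := by
        exact_mod_cast h1'
      refine le_trans h2' (add_le_add ?_ ?_)
      · by_cases hx : x ∈ E i
        · rw [Set.indicator_of_mem hx, Set.indicator_of_mem hx]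
          simp
        · rw [Set.indicator_of_notMem hx, Set.indicator_of_notMem hx]
          simp
      · by_cases hx : x ∈ B i
        · rw [Set.indicator_of_mem hx, Set.indicator_of_mem hx]
          rw [← enorm_eq_nnnorm, ← ofReal_norm]
          refine ENNReal.ofReal_le_ofReal ?_
          calc ‖c i * (starRingEnd ℂ) (γ (z i, x⁻¹))‖ = ‖c i‖ := by simp [hγn (z i, x⁻¹)]
            _ ≤ C' * α := hc i
        · rw [Set.indicator_of_notMem hx, Set.indicator_of_notMem hx]
          simp
    calc ∫⁻ x, ‖b i x‖₊ ∂μ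
        ≤ ∫⁻ x, ((E i).indicator (fun y => (‖f y‖₊ : ℝ≥0∞)) x +
            (B i).indicator (fun _ => ENNReal.ofReal (C' * α)) x) ∂μ := lintegral_mono hpt
      _ = (∫⁻ x, (E i).indicator (fun y => (‖f y‖₊ : ℝ≥0∞)) x ∂μ) +
            ∫⁻ x, (B i).indicator (fun _ => ENNReal.ofReal (C' * α)) x ∂μ :=
          lintegral_add_left' (hf.aestronglyMeasurable.enorm.indicator (hEmeas i)) _
      _ = (∫⁻ x in E i, (‖f x‖₊ : ℝ≥0∞) ∂μ) + ENNReal.ofReal (C' * α) * μ (B i) := by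
          rw [lintegral_indicator (hEmeas i), lintegral_indicator_const (hBmeas i)]
  have hsum1 : ∑' i, ∫⁻ x in E i, (‖f x‖₊ : ℝ≥0∞) ∂μ ≤ ENNReal.ofReal (∫ x, |f x| ∂μ) := by
    rw [← lintegral_iUnion hEmeas hEdisj]
    calc ∫⁻ x in ⋃ i, E i, (‖f x‖₊ : ℝ≥0∞) ∂μ ≤ ∫⁻ x, (‖f x‖₊ : ℝ≥0∞) ∂μ :=
          setLIntegral_le_lintegral _ _
      _ = ENNReal.ofReal (∫ x, ‖f x‖ ∂μ) := (ofReal_integral_norm_eq_lintegral_enorm hf).symm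
      _ = ENNReal.ofReal (∫ x, |f x| ∂μ) := by simp [Real.norm_eq_abs]
  have hsum2 : ∑' i, ENNReal.ofReal (C' * α) * μ (B i) ≤
      ENNReal.ofReal (C' ^ 2 * ∫ x, |f x| ∂μ) := by
    rw [ENNReal.tsum_mul_left]
    calc ENNReal.ofReal (C' * α) * ∑' i, μ (B i)
        ≤ ENNReal.ofReal (C' * α) * ENNReal.ofReal ((C' / α) * ∫ x, f x ∂μ) := by
          gcongr
      _ = ENNReal.ofReal ((C' * α) * ((C' / α) * ∫ x, f x ∂μ)) :=
          (ENNReal.ofReal_mul (by positivity)).symm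
      _ = ENNReal.ofReal (C' ^ 2 * ∫ x, |f x| ∂μ) := by
          rw [hintabs]
          congr 1
          field_simp
  have hbtotal : ∑' i, ∫⁻ x, ‖b i x‖₊ ∂μ ≤
      ENNReal.ofReal ((1 + C' ^ 2) * ∫ x, |f x| ∂μ) := by
    calc ∑' i, ∫⁻ x, ‖b i x‖₊ ∂μ
        ≤ ∑' i, ((∫⁻ x in E i, (‖f x‖₊ : ℝ≥0∞) ∂μ) + ENNReal.ofReal (C' * α) * μ (B i)) :=
          ENNReal.tsum_le_tsum hbnorm
      _ = (∑' i, ∫⁻ x in E i, (‖f x‖₊ : ℝ≥0∞) ∂μ) +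
            ∑' i, ENNReal.ofReal (C' * α) * μ (B i) := ENNReal.tsum_add
      _ ≤ ENNReal.ofReal (∫ x, |f x| ∂μ) + ENNReal.ofReal (C' ^ 2 * ∫ x, |f x| ∂μ) :=
          add_le_add hsum1 hsum2
      _ = ENNReal.ofReal ((1 + C' ^ 2) * ∫ x, |f x| ∂μ) := by
          rw [← ENNReal.ofReal_add habsnn (mul_nonneg (pow_nonneg hC'.le 2) habsnn)]
          congr 1
          ring
  -- integrability of the series
  have hSM : AEStronglyMeasurable (fun x => ∑' i, b i x) μ := by
    refine aestronglyMeasurable_of_tendsto_ae Filter.atTop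
      (f := fun n x => ∑ i ∈ Finset.range n, b i x)
      (fun n => (integrable_finset_sum _ (fun i _ => hbint i)).aestronglyMeasurable) ?_
    exact Filter.Eventually.of_forall fun x => (hsummable x).hasSum.tendsto_sum_nat
  have hptnorm : ∀ x, (‖∑' i, b i x‖₊ : ℝ≥0∞) ≤ ∑' i, (‖b i x‖₊ : ℝ≥0∞) := by
    intro x
    have hs : Summable fun i => ‖b i x‖₊ :=
      summable_of_ne_finset_zero (s := (hS x).toFinset)
        (fun i hi => by rw [hbz x i hi, nnnorm_zero])
    calc (‖∑' i, b i x‖₊ : ℝ≥0∞) ≤ (↑(∑' i, ‖b i x‖₊) : ℝ≥0∞) := by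
          exact_mod_cast nnnorm_tsum_le hs
      _ = ∑' i, (‖b i x‖₊ : ℝ≥0∞) := ENNReal.coe_tsum hs
  have hlint : ∫⁻ x, ‖∑' i, b i x‖₊ ∂μ ≤ ENNReal.ofReal ((1 + C' ^ 2) * ∫ x, |f x| ∂μ) := by
    calc ∫⁻ x, ‖∑' i, b i x‖₊ ∂μ ≤ ∫⁻ x, ∑' i, (‖b i x‖₊ : ℝ≥0∞) ∂μ := lintegral_mono hptnorm
      _ = ∑' i, ∫⁻ x, ‖b i x‖₊ ∂μ :=
          lintegral_tsum fun i => (hbint i).aestronglyMeasurable.enorm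
      _ ≤ _ := hbtotal
  have hIntTsum : Integrable (fun x => ∑' i, b i x) μ :=
    ⟨hSM, lt_of_le_of_lt hlint ENNReal.ofReal_lt_top⟩
  have hgint : Integrable g μ := hfi.sub hIntTsum
  -- conclusion (3)
  have hgL1 : ∫ x, ‖g x‖ ∂μ ≤ C'' * ∫ x, |f x| ∂μ := by
    have hnh : ∫ x, ‖∑' i, b i x‖ ∂μ ≤ (1 + C' ^ 2) * ∫ x, |f x| ∂μ := by
      rw [integral_norm_eq_lintegral_enorm hSM]
      refine le_trans (ENNReal.toReal_mono ENNReal.ofReal_ne_top hlint) ?_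
      rw [ENNReal.toReal_ofReal (mul_nonneg (by positivity) habsnn)]
    have hpt : ∀ x, ‖g x‖ ≤ |f x| + ‖∑' i, b i x‖ := by
      intro x
      simp only [hgdef]
      refine le_trans (norm_sub_le _ _) ?_
      simp [Real.norm_eq_abs]
    calc ∫ x, ‖g x‖ ∂μ ≤ ∫ x, (|f x| + ‖∑' i, b i x‖) ∂μ :=
          integral_mono hgint.norm (hf.abs.add hIntTsum.norm) hpt
      _ = (∫ x, |f x| ∂μ) + ∫ x, ‖∑' i, b i x‖ ∂μ := integral_add hf.abs hIntTsum.norm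
      _ ≤ (∫ x, |f x| ∂μ) + (1 + C' ^ 2) * ∫ x, |f x| ∂μ := by linarith
      _ ≤ C'' * ∫ x, |f x| ∂μ := by
          rw [hC''def]
          nlinarith [mul_nonneg (Nat.cast_nonneg (α := ℝ) M) hC'.le, habsnn]
  refine ⟨g, b, hgint, hbint, ?_, hgae, hgL1, ?_, hmean, ?_⟩
  · refine Filter.Eventually.of_forall fun x => ?_
    simp only [hgdef]
    ring
  · intro i
    exact Filter.Eventually.of_forall fun x hx => hbsupp i x hx
  · refine le_trans hbtotal (ENNReal.ofReal_le_ofReal ?_)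
    rw [hC''def]
    nlinarith [mul_nonneg (Nat.cast_nonneg (α := ℝ) M) hC'.le, habsnn]
end

section
/- Let G be a second-countable unimodular locally compact Hausdorff topological group with Haar measure μ, and let γ : G × G → 𝕋 be a continuous normalized 2-cocycle, i.e. γ(x,y)·γ(xy,z) = γ(x,yz)·γ(y,z) for all x,y,z ∈ G and γ(x,1) = γ(1,x) = 1 for all x ∈ G. Define the γ-twisted convolution (φ ∗_γ ψ)(x) := ∫_G γ(x, y⁻¹)·φ(x·y⁻¹)·ψ(y) dμ(y), and for v ∈ G and 1 ≤ r < ∞ let ρ_r(v) : L^r(G) → L^r(G) be the surjective linear isometry (ρ_r(v)φ)(x) := γ(x, v⁻¹)·φ(x·v⁻¹). Let 1 ≤ p ≤ q < ∞ and let C : L^p(G) → L^q(G) be a bounded linear operator. Then the following are equivalent: (i) C(φ ∗_γ ψ) = (Cφ) ∗_γ ψ for all φ, ψ ∈ L¹(G) ∩ L^p(G); (ii) ρ_q(v) ∘ C = C ∘ ρ_p(v) for every v ∈ G. -/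
open MeasureTheory ENNReal Topology

set_option linter.unusedSectionVars false
set_option linter.unusedVariables false
set_option maxHeartbeats 1000000

/-- The `γ`-twisted convolution `(k ∗_γ f)(x) = ∫ γ(x,y⁻¹)·k(xy⁻¹)·f(y) dμ(y)`. -/
noncomputable def tconv {G : Type*} [Group G] [MeasurableSpace G] (μ : Measure G)
    (γ : G × G → ℂ) (k f : G → ℂ) : G → ℂ :=
  fun x => ∫ y, γ (x, y⁻¹) * k (x * y⁻¹) * f y ∂μ

section Chunk1
variable {G : Type*} [Group G] [TopologicalSpace G] [IsTopologicalGroup G]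
    [LocallyCompactSpace G] [T2Space G] [SecondCountableTopology G]
    [MeasurableSpace G] [BorelSpace G]
    (μ : Measure G) [μ.IsHaarMeasure] [μ.IsMulRightInvariant]
    (γ : G × G → ℂ)

/-- twisted right translation at the function level -/
def tau (v : G) (f : G → ℂ) : G → ℂ := fun x => γ (x, v⁻¹) * f (x * v⁻¹)

lemma gcont (hγcont : Continuous γ) (v : G) : Continuous fun x : G => γ (x, v⁻¹) :=
  hγcont.comp (continuous_id.prodMk continuous_const)

lemma eLpNorm_tau (hγ1 : ∀ p : G × G, ‖γ p‖ = 1) {r : ℝ≥0∞} (v : G) {f : G → ℂ}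
    (hf : AEStronglyMeasurable f μ) :
    eLpNorm (tau γ v f) r μ = eLpNorm f r μ := by
  have h1 : eLpNorm (tau γ v f) r μ = eLpNorm (f ∘ fun x => x * v⁻¹) r μ := by
    refine eLpNorm_congr_norm_ae (Filter.Eventually.of_forall fun x => ?_)
    show ‖γ (x, v⁻¹) * f (x * v⁻¹)‖ = _
    rw [norm_mul, hγ1 (x, v⁻¹), one_mul]; rfl
  rw [h1, eLpNorm_comp_measurePreserving hf (measurePreserving_mul_right μ v⁻¹)]

lemma memℒp_tau (hγcont : Continuous γ) (hγ1 : ∀ p : G × G, ‖γ p‖ = 1) {r : ℝ≥0∞} (v : G)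
    {f : G → ℂ} (hf : MemLp f r μ) :
    MemLp (tau γ v f) r μ := by
  refine ⟨((gcont γ hγcont v).aestronglyMeasurable).mul
    (hf.comp_measurePreserving (measurePreserving_mul_right μ v⁻¹)).aestronglyMeasurable, ?_⟩
  rw [eLpNorm_tau μ γ hγ1 v hf.aestronglyMeasurable]
  exact hf.2

lemma tau_ae_eq (hγ1 : ∀ p : G × G, ‖γ p‖ = 1) {v : G} {f g : G → ℂ} (h : f =ᵐ[μ] g) :
    tau γ v f =ᵐ[μ] tau γ v g := by
  have := (measurePreserving_mul_right μ v⁻¹).quasiMeasurePreserving.ae_eq_comp h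
  filter_upwards [this] with x hx
  show γ (x, v⁻¹) * f (x * v⁻¹) = γ (x, v⁻¹) * g (x * v⁻¹)
  rw [show f (x * v⁻¹) = g (x * v⁻¹) from hx]

/-- The twisted right translation on `Lp`. -/
noncomputable def Tw (hγcont : Continuous γ) (hγ1 : ∀ p : G × G, ‖γ p‖ = 1) (r : ℝ≥0∞)
    (v : G) (F : Lp ℂ r μ) : Lp ℂ r μ :=
  (memℒp_tau μ γ hγcont hγ1 v (Lp.memLp F)).toLp _

variable (hγcont : Continuous γ) (hγ1 : ∀ p : G × G, ‖γ p‖ = 1)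

lemma Tw_coeFn (r : ℝ≥0∞) (v : G) (F : Lp ℂ r μ) :
    ⇑(Tw μ γ hγcont hγ1 r v F) =ᵐ[μ] tau γ v ⇑F :=
  MemLp.coeFn_toLp _

lemma Tw_norm_sub (r : ℝ≥0∞) [Fact (1 ≤ r)] (v : G) (F F' : Lp ℂ r μ) :
    ‖Tw μ γ hγcont hγ1 r v F - Tw μ γ hγcont hγ1 r v F'‖ = ‖F - F'‖ := by
  have h1 : ⇑(Tw μ γ hγcont hγ1 r v F - Tw μ γ hγcont hγ1 r v F') =ᵐ[μ]
      tau γ v (⇑F - ⇑F') := by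
    filter_upwards [Lp.coeFn_sub (Tw μ γ hγcont hγ1 r v F) (Tw μ γ hγcont hγ1 r v F'),
      Tw_coeFn μ γ hγcont hγ1 r v F, Tw_coeFn μ γ hγcont hγ1 r v F'] with x h1 h2 h3
    simp only [h1, Pi.sub_apply, h2, h3, tau, mul_sub]
  rw [Lp.norm_def, eLpNorm_congr_ae h1,
    eLpNorm_tau μ γ hγ1 v ((Lp.aestronglyMeasurable F).sub (Lp.aestronglyMeasurable F')),
    Lp.norm_def, eLpNorm_congr_ae (Lp.coeFn_sub F F')]

lemma Tw_isometry (r : ℝ≥0∞) [Fact (1 ≤ r)] (v : G) :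
    Isometry (Tw μ γ hγcont hγ1 r v) :=
  Isometry.of_dist_eq fun F F' => by
    rw [dist_eq_norm, dist_eq_norm, Tw_norm_sub]

lemma Tw_norm (r : ℝ≥0∞) [Fact (1 ≤ r)] (v : G) (F : Lp ℂ r μ) :
    ‖Tw μ γ hγcont hγ1 r v F‖ = ‖F‖ := by
  rw [Tw, Lp.norm_toLp _ (memℒp_tau μ γ hγcont hγ1 v (Lp.memLp F)),
    eLpNorm_tau μ γ hγ1 v (Lp.aestronglyMeasurable F), Lp.norm_def]

lemma Tw_add (r : ℝ≥0∞) (v : G) (F F' : Lp ℂ r μ) :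
    Tw μ γ hγcont hγ1 r v (F + F') = Tw μ γ hγcont hγ1 r v F + Tw μ γ hγcont hγ1 r v F' := by
  have h1 : tau γ v ⇑(F + F') =ᵐ[μ] tau γ v ⇑F + tau γ v ⇑F' := by
    refine (tau_ae_eq μ γ hγ1 (Lp.coeFn_add F F')).trans
      (Filter.Eventually.of_forall fun x => ?_)
    show γ (x, v⁻¹) * (⇑F + ⇑F') (x * v⁻¹) = _
    simp [tau, mul_add]
  rw [Tw, MemLp.toLp_congr _ ((memℒp_tau μ γ hγcont hγ1 v (Lp.memLp F)).add
      (memℒp_tau μ γ hγcont hγ1 v (Lp.memLp F'))) h1]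
  rfl

end Chunk1

section Chunk2
variable {G : Type*} [Group G] [TopologicalSpace G] [IsTopologicalGroup G]
    [LocallyCompactSpace G] [T2Space G] [SecondCountableTopology G]
    [MeasurableSpace G] [BorelSpace G]
    (μ : Measure G) [μ.IsHaarMeasure] [μ.IsMulRightInvariant]
    (γ : G × G → ℂ)

lemma qmp_m : Measure.QuasiMeasurePreserving (fun z : G × G => z.1 * z.2⁻¹) (μ.prod μ) μ := by
  have h1 : Measure.QuasiMeasurePreserving (Prod.fst : G × G → G) (μ.prod μ) μ :=
    Measure.quasiMeasurePreserving_fst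
  have h2 := (measurePreserving_div_prod μ μ).quasiMeasurePreserving
  have h3 := h1.comp h2
  convert h3 using 2 with z
  simp [div_eq_mul_inv, Function.comp]

lemma tconv_congr_left {f₁ f₂ h : G → ℂ} (hf : f₁ =ᵐ[μ] f₂) :
    tconv μ γ f₁ h =ᵐ[μ] tconv μ γ f₂ h := by
  have h1 : (fun z : G × G => f₁ (z.1 * z.2⁻¹)) =ᵐ[μ.prod μ]
      (fun z : G × G => f₂ (z.1 * z.2⁻¹)) := (qmp_m μ).ae_eq_comp hf
  filter_upwards [MeasureTheory.Measure.ae_ae_of_ae_prod h1] with x hx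
  refine integral_congr_ae ?_
  filter_upwards [hx] with y hy
  rw [show f₁ (x * y⁻¹) = f₂ (x * y⁻¹) from hy]

/-- Hölder-type bound for set integrals of `ℒr` functions. -/
lemma setIntegral_norm_le {r : ℝ≥0∞} (hr1 : 1 ≤ r) (hrt : r ≠ ∞) {g : G → ℂ}
    (hg : AEStronglyMeasurable g μ) (hgr : eLpNorm g r μ ≠ ∞) {s : Set G} (hs : μ s ≠ ∞) :
    ∫ x in s, ‖g x‖ ∂μ ≤ ((μ s) ^ (1 - 1 / r.toReal) * eLpNorm g r μ).toReal := by
  have hrr : (1 : ℝ) ≤ r.toReal := by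
    have := ENNReal.toReal_mono hrt hr1
    simpa using this
  have he : (0 : ℝ) ≤ 1 - 1 / r.toReal := by
    have h0 : (0:ℝ) < r.toReal := lt_of_lt_of_le one_pos hrr
    have : 1 / r.toReal ≤ 1 := by
      rw [div_le_one h0]; exact hrr
    linarith
  have hfin : (μ s) ^ (1 - 1 / r.toReal) * eLpNorm g r μ ≠ ∞ :=
    ENNReal.mul_ne_top (ENNReal.rpow_lt_top_of_nonneg he hs).ne hgr
  have h1 : ∫ x in s, ‖g x‖ ∂μ = (eLpNorm g 1 (μ.restrict s)).toReal := by
    rw [integral_eq_lintegral_of_nonneg_ae (Filter.Eventually.of_forall fun x => norm_nonneg _)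
      hg.norm.restrict, eLpNorm_one_eq_lintegral_enorm]
    congr 1
    exact lintegral_congr fun x => ofReal_norm (g x)
  rw [h1]
  refine ENNReal.toReal_mono hfin ?_
  have h2 : eLpNorm g 1 (μ.restrict s) ≤
      eLpNorm g r (μ.restrict s) * (μ.restrict s) Set.univ ^ (1 / (1 : ℝ≥0∞).toReal - 1 / r.toReal) :=
    eLpNorm_le_eLpNorm_mul_rpow_measure_univ hr1 hg.restrict
  refine h2.trans ?_
  rw [Measure.restrict_apply_univ]
  have h3 : eLpNorm g r (μ.restrict s) ≤ eLpNorm g r μ :=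
    eLpNorm_mono_measure _ Measure.restrict_le_self
  calc eLpNorm g r (μ.restrict s) * μ s ^ (1 / (1:ℝ≥0∞).toReal - 1 / r.toReal)
      ≤ eLpNorm g r μ * μ s ^ (1 - 1 / r.toReal) := by
        rw [show 1 / (1:ℝ≥0∞).toReal - 1 / r.toReal = 1 - 1 / r.toReal by norm_num]
        exact mul_le_mul_left h3 _
    _ = μ s ^ (1 - 1 / r.toReal) * eLpNorm g r μ := mul_comm _ _
end Chunk2

section Chunk3
variable {G : Type*} [Group G] [TopologicalSpace G] [IsTopologicalGroup G]
    [LocallyCompactSpace G] [T2Space G] [SecondCountableTopology G]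
    [MeasurableSpace G] [BorelSpace G]
    (μ : Measure G) [μ.IsHaarMeasure] [μ.IsMulRightInvariant]
    (γ : G × G → ℂ) (hγcont : Continuous γ) (hγ1 : ∀ p : G × G, ‖γ p‖ = 1)

lemma haar_regular : μ.Regular := by
  obtain ⟨K, hK, h1K, -⟩ := exists_compact_subset isOpen_univ (Set.mem_univ (1 : G))
  exact Measure.regular_of_isMulLeftInvariant hK ⟨1, h1K⟩ hK.measure_lt_top.ne

lemma Tw_continuous (r : ℝ≥0∞) [Fact (1 ≤ r)] (hrt : r ≠ ∞) (F : Lp ℂ r μ) :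
    Continuous fun v : G => Tw μ γ hγcont hγ1 r v F := by
  haveI : μ.Regular := haar_regular μ
  haveI : μ.InnerRegularCompactLTTop := inferInstance
  set f : G → ℂ := ⇑F with hf
  have hr0 : r ≠ 0 := (zero_lt_one.trans_le (Fact.out : (1:ℝ≥0∞) ≤ r)).ne'
  set c : ℝ := r.toReal with hcdef
  have hc : 0 < c := ENNReal.toReal_pos hr0 hrt
  -- the translation part, via mathlib's continuity of compMeasurePreserving
  set gm : G → C(G, G) := fun v => ⟨fun x => x * v⁻¹, by continuity⟩ with hgmdef
  have hgm : ∀ v : G, MeasurePreserving (gm v) μ μ := fun v =>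
    measurePreserving_mul_right μ v⁻¹
  have hgmc : Continuous gm := by
    apply ContinuousMap.continuous_of_continuous_uncurry
    exact continuous_snd.mul (continuous_fst.inv)
  have hR : Continuous fun v : G => Lp.compMeasurePreserving (gm v) (hgm v) F :=
    Continuous.compMeasurePreservingLp continuous_const hgmc hgm hrt
  refine continuous_iff_continuousAt.mpr fun v₀ => ?_
  set g₀ : G → ℂ := fun x => f (x * v₀⁻¹) with hg₀
  have hg₀ℒ : MemLp g₀ r μ :=
    (Lp.memLp F).comp_measurePreserving (measurePreserving_mul_right μ v₀⁻¹)
  -- the two error terms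
  set A : G → ℝ≥0∞ := fun v => eLpNorm (fun x => f (x * v⁻¹) - g₀ x) r μ with hA
  set B : G → ℝ≥0∞ := fun v =>
    eLpNorm (fun x => (γ (x, v⁻¹) - γ (x, v₀⁻¹)) * g₀ x) r μ with hB
  have aesm_tr : ∀ v : G, AEStronglyMeasurable (fun x => f (x * v⁻¹)) μ := fun v =>
    ((Lp.memLp F).comp_measurePreserving (measurePreserving_mul_right μ v⁻¹)).aestronglyMeasurable
  -- main bound
  have key : ∀ v : G, eLpNorm (tau γ v f - tau γ v₀ f) r μ ≤ A v + B v := by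
    intro v
    have hdecomp : tau γ v f - tau γ v₀ f =
        (fun x => γ (x, v⁻¹) * (f (x * v⁻¹) - g₀ x)) +
          fun x => (γ (x, v⁻¹) - γ (x, v₀⁻¹)) * g₀ x := by
      funext x
      simp only [tau, Pi.sub_apply, Pi.add_apply, hg₀]
      ring
    rw [hdecomp]
    refine (eLpNorm_add_le
      (((gcont γ hγcont v).aestronglyMeasurable).mul ((aesm_tr v).sub hg₀ℒ.aestronglyMeasurable))
      ((((gcont γ hγcont v).sub (gcont γ hγcont v₀)).aestronglyMeasurable).mul
        hg₀ℒ.aestronglyMeasurable) Fact.out).trans ?_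
    refine add_le_add (le_of_eq ?_) le_rfl
    refine eLpNorm_congr_norm_ae (Filter.Eventually.of_forall fun x => ?_)
    simp only [Pi.mul_apply, Pi.sub_apply]
    rw [norm_mul, hγ1 (x, v⁻¹), one_mul]
  -- A tends to zero
  have hAlim : Filter.Tendsto A (𝓝 v₀) (𝓝 0) := by
    have hRt : Filter.Tendsto (fun v => Lp.compMeasurePreserving (gm v) (hgm v) F) (𝓝 v₀)
        (𝓝 (Lp.compMeasurePreserving (gm v₀) (hgm v₀) F)) := hR.continuousAt
    have hnorm : Filter.Tendsto
        (fun v => ‖Lp.compMeasurePreserving (gm v) (hgm v) F -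
          Lp.compMeasurePreserving (gm v₀) (hgm v₀) F‖) (𝓝 v₀) (𝓝 0) :=
      tendsto_iff_norm_sub_tendsto_zero.mp hRt
    have hAeq : ∀ v : G, A v = ENNReal.ofReal
        ‖Lp.compMeasurePreserving (gm v) (hgm v) F -
          Lp.compMeasurePreserving (gm v₀) (hgm v₀) F‖ := by
      intro v
      have hco : ⇑(Lp.compMeasurePreserving (gm v) (hgm v) F -
          Lp.compMeasurePreserving (gm v₀) (hgm v₀) F) =ᵐ[μ]
          fun x => f (x * v⁻¹) - g₀ x := by
        filter_upwards [Lp.coeFn_sub (Lp.compMeasurePreserving (gm v) (hgm v) F)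
          (Lp.compMeasurePreserving (gm v₀) (hgm v₀) F),
          Lp.coeFn_compMeasurePreserving F (hgm v), Lp.coeFn_compMeasurePreserving F (hgm v₀)]
          with x h1 h2 h3
        rw [h1, Pi.sub_apply, h2, h3]
        rfl
      show eLpNorm (fun x => f (x * v⁻¹) - g₀ x) r μ = _
      rw [← eLpNorm_congr_ae hco, Lp.norm_def, ENNReal.ofReal_toReal (Lp.eLpNorm_ne_top _)]
    rw [show A = fun v => ENNReal.ofReal
        ‖Lp.compMeasurePreserving (gm v) (hgm v) F -
          Lp.compMeasurePreserving (gm v₀) (hgm v₀) F‖ from funext hAeq]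
    have := (ENNReal.continuous_ofReal.tendsto 0).comp hnorm
    simpa [Function.comp_def] using this
  -- B tends to zero
  have hBlim : Filter.Tendsto B (𝓝 v₀) (𝓝 0) := by
    obtain ⟨fm, hfmsm, hfmeq⟩ :
        ∃ fm : G → ℂ, StronglyMeasurable fm ∧ g₀ =ᵐ[μ] fm :=
      ⟨hg₀ℒ.aestronglyMeasurable.mk g₀, hg₀ℒ.aestronglyMeasurable.stronglyMeasurable_mk,
        hg₀ℒ.aestronglyMeasurable.ae_eq_mk⟩
    have hBeq : ∀ v : G, B v =
        (∫⁻ x, (‖(γ (x, v⁻¹) - γ (x, v₀⁻¹)) * fm x‖₊ : ℝ≥0∞) ^ c ∂μ) ^ (1 / c) := by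
      intro v
      have : (fun x => (γ (x, v⁻¹) - γ (x, v₀⁻¹)) * g₀ x) =ᵐ[μ]
          fun x => (γ (x, v⁻¹) - γ (x, v₀⁻¹)) * fm x := by
        filter_upwards [hfmeq] with x hx; rw [hx]
      show eLpNorm (fun x => (γ (x, v⁻¹) - γ (x, v₀⁻¹)) * g₀ x) r μ = _
      rw [eLpNorm_congr_ae this, eLpNorm_eq_lintegral_rpow_enorm_toReal hr0 hrt]; rfl
    rw [show B = fun v =>
        (∫⁻ x, (‖(γ (x, v⁻¹) - γ (x, v₀⁻¹)) * fm x‖₊ : ℝ≥0∞) ^ c ∂μ) ^ (1 / c)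
      from funext hBeq]
    have hfin : ∫⁻ x, (‖fm x‖₊ : ℝ≥0∞) ^ c ∂μ < ∞ := by
      have h1 : eLpNorm fm r μ < ∞ := by
        rw [← eLpNorm_congr_ae hfmeq]; exact hg₀ℒ.2
      exact lintegral_rpow_enorm_lt_top_of_eLpNorm_lt_top hr0 hrt h1
    have hlim0 : Filter.Tendsto
        (fun v => ∫⁻ x, (‖(γ (x, v⁻¹) - γ (x, v₀⁻¹)) * fm x‖₊ : ℝ≥0∞) ^ c ∂μ) (𝓝 v₀)
        (𝓝 0) := by
      have h0 : (0 : ℝ≥0∞) = ∫⁻ _x, (0 : ℝ≥0∞) ∂μ := by simp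
      rw [h0]
      refine tendsto_lintegral_filter_of_dominated_convergence
        (fun x => ((2 : ℝ≥0∞) * ‖fm x‖₊) ^ c) (Filter.Eventually.of_forall fun v => ?_)
        (Filter.Eventually.of_forall fun v => Filter.Eventually.of_forall fun x => ?_) ?_ ?_
      · exact ENNReal.continuous_rpow_const.measurable.comp
          ((((gcont γ hγcont v).measurable.sub (gcont γ hγcont v₀).measurable).mul
            hfmsm.measurable).nnnorm.coe_nnreal_ennreal)
      · refine ENNReal.rpow_le_rpow ?_ hc.le
        have hre : ‖(γ (x, v⁻¹) - γ (x, v₀⁻¹)) * fm x‖ ≤ 2 * ‖fm x‖ := by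
          rw [norm_mul]
          refine mul_le_mul_of_nonneg_right ?_ (norm_nonneg _)
          calc ‖γ (x, v⁻¹) - γ (x, v₀⁻¹)‖ ≤ ‖γ (x, v⁻¹)‖ + ‖γ (x, v₀⁻¹)‖ := norm_sub_le _ _
            _ = 2 := by rw [hγ1, hγ1]; norm_num
        have hnn : ‖(γ (x, v⁻¹) - γ (x, v₀⁻¹)) * fm x‖₊ ≤ 2 * ‖fm x‖₊ := by
          rw [← NNReal.coe_le_coe]
          push_cast
          exact hre
        simpa [ENNReal.coe_mul] using ENNReal.coe_le_coe.2 hnn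
      · refine ne_of_lt ?_
        have heq : ∀ x : G, ((2 : ℝ≥0∞) * ‖fm x‖₊) ^ c = 2 ^ c * (‖fm x‖₊ : ℝ≥0∞) ^ c :=
          fun x => ENNReal.mul_rpow_of_nonneg _ _ hc.le
        simp only [heq]
        have hm : Measurable fun x : G => (‖fm x‖₊ : ℝ≥0∞) ^ c :=
          ENNReal.continuous_rpow_const.measurable.comp
            hfmsm.measurable.nnnorm.coe_nnreal_ennreal
        rw [lintegral_const_mul _ hm]
        exact ENNReal.mul_lt_top (ENNReal.rpow_lt_top_of_nonneg hc.le (by norm_num)) hfin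
      · refine Filter.Eventually.of_forall fun x => ?_
        have t1 : Filter.Tendsto (fun v : G => (γ (x, v⁻¹) - γ (x, v₀⁻¹)) * fm x) (𝓝 v₀)
            (𝓝 0) := by
          have hcont : Continuous fun v : G => (γ (x, v⁻¹) - γ (x, v₀⁻¹)) * fm x :=
            ((hγcont.comp (continuous_const.prodMk continuous_inv)).sub
              continuous_const).mul continuous_const
          have := hcont.continuousAt (x := v₀)
          simpa [ContinuousAt, sub_self] using this
        have t2 : Filter.Tendsto (fun z : ℂ => (‖z‖₊ : ℝ≥0∞) ^ c) (𝓝 0) (𝓝 0) := by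
          have hcont : Continuous fun z : ℂ => (‖z‖₊ : ℝ≥0∞) ^ c :=
            ENNReal.continuous_rpow_const.comp (ENNReal.continuous_coe.comp continuous_nnnorm)
          have := hcont.continuousAt (x := (0 : ℂ))
          simpa [ContinuousAt, ENNReal.zero_rpow_of_pos hc] using this
        exact t2.comp t1
    have := (ENNReal.continuous_rpow_const (y := 1 / c)).continuousAt.tendsto.comp hlim0
    simpa [Function.comp_def, one_div,
      ENNReal.zero_rpow_of_pos (show (0:ℝ) < c⁻¹ by positivity)] using this
  -- combine
  have hsum : Filter.Tendsto (fun v => A v + B v) (𝓝 v₀) (𝓝 0) := by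
    have := Filter.Tendsto.add hAlim hBlim
    simpa using this
  have hmain : Filter.Tendsto (fun v => eLpNorm (tau γ v f - tau γ v₀ f) r μ) (𝓝 v₀)
      (𝓝 0) :=
    tendsto_of_tendsto_of_tendsto_of_le_of_le tendsto_const_nhds hsum
      (fun v => zero_le) key
  rw [ContinuousAt, tendsto_iff_norm_sub_tendsto_zero]
  have hnormeq : ∀ v : G, ‖Tw μ γ hγcont hγ1 r v F - Tw μ γ hγcont hγ1 r v₀ F‖ =
      (eLpNorm (tau γ v f - tau γ v₀ f) r μ).toReal := by
    intro v
    have hco : ⇑(Tw μ γ hγcont hγ1 r v F - Tw μ γ hγcont hγ1 r v₀ F) =ᵐ[μ]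
        tau γ v f - tau γ v₀ f := by
      filter_upwards [Lp.coeFn_sub (Tw μ γ hγcont hγ1 r v F) (Tw μ γ hγcont hγ1 r v₀ F),
        Tw_coeFn μ γ hγcont hγ1 r v F, Tw_coeFn μ γ hγcont hγ1 r v₀ F] with x h1 h2 h3
      rw [h1, Pi.sub_apply, h2, h3]
      rfl
    rw [Lp.norm_def, eLpNorm_congr_ae hco]
  rw [show (fun v => ‖Tw μ γ hγcont hγ1 r v F - Tw μ γ hγcont hγ1 r v₀ F‖) = fun v =>
      (eLpNorm (tau γ v f - tau γ v₀ f) r μ).toReal from funext hnormeq]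
  have := (ENNReal.tendsto_toReal (by simp : (0:ℝ≥0∞) ≠ ∞)).comp hmain
  simpa [Function.comp_def] using this

end Chunk3

section Chunk4
variable {G : Type*} [Group G] [TopologicalSpace G] [IsTopologicalGroup G]
    [LocallyCompactSpace G] [T2Space G] [SecondCountableTopology G]
    [MeasurableSpace G] [BorelSpace G]
    (μ : Measure G) [μ.IsHaarMeasure] [μ.IsMulRightInvariant]
    (γ : G × G → ℂ) (hγcont : Continuous γ) (hγ1 : ∀ p : G × G, ‖γ p‖ = 1)

lemma lpIntegrableOn {r : ℝ≥0∞} [Fact (1 ≤ r)] {g : G → ℂ} (hg : MemLp g r μ) {s : Set G}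
    (hs : μ s ≠ ∞) : IntegrableOn g s μ := by
  haveI : IsFiniteMeasure (μ.restrict s) :=
    ⟨by rw [Measure.restrict_apply_univ]; exact lt_top_iff_ne_top.2 hs⟩
  exact (hg.restrict s).integrable Fact.out

/-- Integration over a finite-measure set as a continuous linear functional on `Lp`. -/
noncomputable def Js (r : ℝ≥0∞) [Fact (1 ≤ r)] (hrt : r ≠ ∞) (s : Set G) (hs : μ s ≠ ∞) :
    Lp ℂ r μ →L[ℂ] ℂ :=
  LinearMap.mkContinuousOfExistsBound
    { toFun := fun f => ∫ x in s, f x ∂μ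
      map_add' := fun f g => by
        rw [← integral_add (lpIntegrableOn μ (Lp.memLp f) hs) (lpIntegrableOn μ (Lp.memLp g) hs)]
        refine integral_congr_ae ?_
        filter_upwards [ae_restrict_of_ae (Lp.coeFn_add f g)] with x hx
        simpa using hx
      map_smul' := fun c f => by
        simp only [RingHom.id_apply]
        rw [← integral_smul]
        refine integral_congr_ae ?_
        filter_upwards [ae_restrict_of_ae (Lp.coeFn_smul c f)] with x hx
        simpa using hx }
    ⟨((μ s) ^ (1 - 1 / r.toReal)).toReal, fun f => by
      simp only [LinearMap.coe_mk, AddHom.coe_mk]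
      calc ‖∫ x in s, f x ∂μ‖ ≤ ∫ x in s, ‖f x‖ ∂μ := norm_integral_le_integral_norm _
        _ ≤ ((μ s) ^ (1 - 1 / r.toReal) * eLpNorm (⇑f) r μ).toReal :=
            setIntegral_norm_le μ Fact.out hrt (Lp.aestronglyMeasurable f)
              (Lp.eLpNorm_ne_top f) hs
        _ = ((μ s) ^ (1 - 1 / r.toReal)).toReal * ‖f‖ := by
            rw [ENNReal.toReal_mul, Lp.norm_def]⟩

lemma Js_apply (r : ℝ≥0∞) [Fact (1 ≤ r)] (hrt : r ≠ ∞) (s : Set G) (hs : μ s ≠ ∞)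
    (f : Lp ℂ r μ) : Js μ r hrt s hs f = ∫ x in s, f x ∂μ := rfl

lemma w_integrable (r : ℝ≥0∞) [Fact (1 ≤ r)] (hrt : r ≠ ∞) (F : Lp ℂ r μ) {h : G → ℂ}
    (hh : Integrable h μ) :
    Integrable (fun y => h y • Tw μ γ hγcont hγ1 r y F) μ := by
  refine Integrable.mono' (hh.norm.mul_const ‖F‖) ?_ ?_
  · exact hh.aestronglyMeasurable.smul
      (Tw_continuous μ γ hγcont hγ1 r hrt F).aestronglyMeasurable
  · refine Filter.Eventually.of_forall fun y => ?_
    rw [norm_smul, Tw_norm]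

lemma lemmaA (r : ℝ≥0∞) [Fact (1 ≤ r)] (hrt : r ≠ ∞) (F : Lp ℂ r μ) {h : G → ℂ}
    (hh : Integrable h μ) :
    ⇑(∫ y, h y • Tw μ γ hγcont hγ1 r y F ∂μ) =ᵐ[μ] tconv μ γ (⇑F) h := by
  haveI : SigmaFinite μ := by infer_instance
  set I : Lp ℂ r μ := ∫ y, h y • Tw μ γ hγcont hγ1 r y F ∂μ with hI
  set k : G × G → ℂ := fun z => γ (z.1, z.2⁻¹) * F (z.1 * z.2⁻¹) * h z.2 with hk
  have hr1 : (1 : ℝ≥0∞) ≤ r := Fact.out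
  -- measurability of the kernel
  have hk_aesm : AEStronglyMeasurable k (μ.prod μ) := by
    have h1 : Continuous fun z : G × G => γ (z.1, z.2⁻¹) :=
      hγcont.comp (continuous_fst.prodMk continuous_snd.inv)
    have h2 : AEStronglyMeasurable (fun z : G × G => (F : G → ℂ) (z.1 * z.2⁻¹)) (μ.prod μ) :=
      (Lp.aestronglyMeasurable F).comp_quasiMeasurePreserving (qmp_m μ)
    have h3 : AEStronglyMeasurable (fun z : G × G => h z.2) (μ.prod μ) :=
      hh.aestronglyMeasurable.comp_quasiMeasurePreserving Measure.quasiMeasurePreserving_snd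
    exact (h1.aestronglyMeasurable.mul h2).mul h3
  -- the main step : integrability of the kernel on s ×ˢ univ and Fubini
  have main : ∀ s : Set G, MeasurableSet s → μ s < ∞ →
      Integrable k ((μ.restrict s).prod μ) := by
    intro s hms hμs
    have hk_aesm_s : AEStronglyMeasurable k ((μ.restrict s).prod μ) := by
      rw [show (μ.restrict s).prod μ = (μ.prod μ).restrict (s ×ˢ Set.univ) by
        rw [← Measure.prod_restrict, Measure.restrict_univ]]
      exact hk_aesm.restrict
    set M : ℝ := ((μ s) ^ (1 - 1 / r.toReal) * eLpNorm (⇑F) r μ).toReal with hM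
    have hslice : ∀ y : G, ∫ x in s, ‖k (x, y)‖ ∂μ ≤ M * ‖h y‖ := by
      intro y
      have e1 : ∀ x : G, ‖k (x, y)‖ = ‖tau γ y (⇑F) x‖ * ‖h y‖ := by
        intro x
        simp only [hk, tau, norm_mul]
      have e2 : ∫ x in s, ‖k (x, y)‖ ∂μ = (∫ x in s, ‖tau γ y (⇑F) x‖ ∂μ) * ‖h y‖ := by
        simp only [e1]
        exact integral_mul_const _ _
      rw [e2]
      refine mul_le_mul_of_nonneg_right ?_ (norm_nonneg _)
      have e3 := setIntegral_norm_le μ hr1 hrt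
        (memℒp_tau μ γ hγcont hγ1 y (Lp.memLp F)).aestronglyMeasurable
        (by simpa [eLpNorm_tau μ γ hγ1 y (Lp.aestronglyMeasurable F)]
            using Lp.eLpNorm_ne_top F) hμs.ne
      rwa [eLpNorm_tau μ γ hγ1 y (Lp.aestronglyMeasurable F)] at e3
    refine (integrable_prod_iff' hk_aesm_s).2 ⟨?_, ?_⟩
    · refine Filter.Eventually.of_forall fun y => ?_
      have h1 : IntegrableOn (tau γ y (⇑F)) s μ :=
        lpIntegrableOn μ (memℒp_tau μ γ hγcont hγ1 y (Lp.memLp F)) hμs.ne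
      exact h1.mul_const (h y)
    · refine Integrable.mono' (hh.norm.const_mul M) ?_ ?_
      · have := (hk_aesm_s.norm.prod_swap).integral_prod_right'
          (ν := μ.restrict s) (μ := μ)
        exact this
      · refine Filter.Eventually.of_forall fun y => ?_
        rw [Real.norm_eq_abs, abs_of_nonneg (integral_nonneg fun x => norm_nonneg _)]
        exact hslice y
  -- conclusion via equality of set integrals
  refine ae_eq_of_forall_setIntegral_eq_of_sigmaFinite
    (fun s _ hμs => lpIntegrableOn μ (Lp.memLp I) hμs.ne)
    (fun s hms hμs => (main s hms hμs).integral_prod_left) ?_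
  intro s hms hμs
  have hk_int := main s hms hμs
  have e1 : ∫ x in s, tconv μ γ (⇑F) h x ∂μ =
      ∫ z, k z ∂((μ.restrict s).prod μ) := (integral_prod _ hk_int).symm
  have e2 : ∫ z, k z ∂((μ.restrict s).prod μ) = ∫ y, ∫ x in s, k (x, y) ∂μ ∂μ :=
    integral_prod_symm _ hk_int
  have e3 : ∀ y : G, ∫ x in s, k (x, y) ∂μ = h y * ∫ x in s, tau γ y (⇑F) x ∂μ := by
    intro y
    have : ∀ x : G, k (x, y) = tau γ y (⇑F) x * h y := fun x => rfl
    simp only [this]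
    rw [integral_mul_const, mul_comm]
  have e4 : ∫ x in s, (I : G → ℂ) x ∂μ = Js μ r hrt s hμs.ne I := rfl
  have e5 : Js μ r hrt s hμs.ne I = ∫ y, Js μ r hrt s hμs.ne (h y • Tw μ γ hγcont hγ1 r y F) ∂μ :=
    (ContinuousLinearMap.integral_comp_comm _ (w_integrable μ γ hγcont hγ1 r hrt F hh)).symm
  have e6 : ∀ y : G, Js μ r hrt s hμs.ne (h y • Tw μ γ hγcont hγ1 r y F) =
      h y * ∫ x in s, tau γ y (⇑F) x ∂μ := by
    intro y
    rw [_root_.map_smul, smul_eq_mul, Js_apply]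
    congr 1
    refine integral_congr_ae ?_
    exact ae_restrict_of_ae (Tw_coeFn μ γ hγcont hγ1 r y F)
  rw [e4, e5, e1, e2]
  refine integral_congr_ae (Filter.Eventually.of_forall fun y => ?_)
  show Js μ r hrt s hμs.ne (h y • Tw μ γ hγcont hγ1 r y F) = ∫ x in s, k (x, y) ∂μ
  rw [e6 y, e3 y]

end Chunk4

section Chunk5
variable {G : Type*} [Group G] [TopologicalSpace G] [IsTopologicalGroup G]
    [LocallyCompactSpace G] [T2Space G] [SecondCountableTopology G]
    [MeasurableSpace G] [BorelSpace G]
    (μ : Measure G) [μ.IsHaarMeasure] [μ.IsMulRightInvariant]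

lemma lemmaC {E : Type*} [NormedAddCommGroup E] [NormedSpace ℂ E] [CompleteSpace E]
    (p : ℝ≥0∞) {u : G → E} (hu : Continuous u)
    (hvan : ∀ ψ : G → ℂ, Integrable ψ μ → MemLp ψ p μ → ∫ y, ψ y • u y ∂μ = 0) :
    ∀ y₀ : G, u y₀ = 0 := by
  intro y₀
  by_contra hne
  have hpos : 0 < ‖u y₀‖ := norm_pos_iff.2 hne
  set ε : ℝ := ‖u y₀‖ / 2 with hεdef
  have hε : 0 < ε := by positivity
  have hUopen : IsOpen (u ⁻¹' Metric.ball (u y₀) ε) := Metric.isOpen_ball.preimage hu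
  have hy₀U : y₀ ∈ u ⁻¹' Metric.ball (u y₀) ε := by
    simp [Metric.mem_ball, hε]
  obtain ⟨K, hK, hyint, hKU⟩ := exists_compact_subset hUopen hy₀U
  have hms : MeasurableSet K := hK.isClosed.measurableSet
  set ψ : G → ℂ := K.indicator fun _ => (1 : ℂ) with hψdef
  have hψint : Integrable ψ μ := by
    rw [hψdef, integrable_indicator_iff hms]
    exact integrableOn_const hK.measure_lt_top.ne
  have hψp : MemLp ψ p μ := memLp_indicator_const p hms 1 (Or.inr hK.measure_lt_top.ne)
  have h0 : ∫ y in K, u y ∂μ = 0 := by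
    have h1 : (fun y => ψ y • u y) = K.indicator u := by
      funext y
      by_cases hy : y ∈ K <;> simp [hψdef, Set.indicator_apply, hy]
    have := hvan ψ hψint hψp
    rwa [h1, integral_indicator hms] at this
  have hIuK : IntegrableOn u K μ := hu.continuousOn.integrableOn_compact hK
  have hconst : IntegrableOn (fun _ => u y₀) K μ :=
    integrableOn_const hK.measure_lt_top.ne
  have hdiff : ‖∫ y in K, (u y - u y₀) ∂μ‖ ≤ ε * (μ K).toReal := by
    refine norm_setIntegral_le_of_norm_le_const hK.measure_lt_top ?_
    intro y hy
    have := hKU hy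
    simp only [Set.mem_preimage, Metric.mem_ball] at this
    rw [← dist_eq_norm]
    exact this.le
  have heq : ∫ y in K, (u y - u y₀) ∂μ = -((μ K).toReal • u y₀) := by
    rw [integral_sub hIuK hconst, h0, setIntegral_const, zero_sub]; rfl
  rw [heq, norm_neg, norm_smul, Real.norm_eq_abs,
    abs_of_nonneg ENNReal.toReal_nonneg] at hdiff
  have hKpos : (0 : ℝ≥0∞) < μ K :=
    lt_of_lt_of_le (isOpen_interior.measure_pos μ ⟨y₀, hyint⟩) (measure_mono interior_subset)
  have htR : 0 < (μ K).toReal := ENNReal.toReal_pos hKpos.ne' hK.measure_lt_top.ne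
  rw [hεdef] at hdiff
  nlinarith [hdiff, htR, hpos]

end Chunk5


/-- On a second-countable unimodular locally compact group with a
continuous normalized circle-valued 2-cocycle `γ`, a bounded operator
`C : L^p(G) → L^q(G)` (`1 ≤ p ≤ q < ∞`) commutes with right `γ`-twisted convolutions,
i.e. `C(φ ∗_γ ψ) = (Cφ) ∗_γ ψ` for all `φ, ψ ∈ L¹ ∩ L^p`, if and only if it commutes with
all the twisted right translations `ρ(v)φ = γ(·, v⁻¹)·φ(· v⁻¹)`. -/
theorem statement10 {G : Type*} [Group G] [TopologicalSpace G] [IsTopologicalGroup G]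
    [LocallyCompactSpace G] [T2Space G] [SecondCountableTopology G]
    [MeasurableSpace G] [BorelSpace G]
    (μ : Measure G) [μ.IsHaarMeasure] [μ.IsMulRightInvariant]
    (γ : G × G → ℂ) (hγcont : Continuous γ) (hγ1 : ∀ p : G × G, ‖γ p‖ = 1)
    (hγcoc : ∀ x y z : G, γ (x, y) * γ (x * y, z) = γ (x, y * z) * γ (y, z))
    (hγnorm : ∀ x : G, γ (x, 1) = 1 ∧ γ (1, x) = 1)
    (p q : ℝ≥0∞) [Fact (1 ≤ p)] [Fact (1 ≤ q)] (hpq : p ≤ q) (hq : q < ⊤)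
    (C : Lp ℂ p μ →L[ℂ] Lp ℂ q μ) :
    (∀ (φ ψ : G → ℂ), Integrable φ μ → ∀ hφp : MemLp φ p μ,
        Integrable ψ μ → MemLp ψ p μ →
        ∀ hc : MemLp (tconv μ γ φ ψ) p μ,
          (C (hc.toLp (tconv μ γ φ ψ)) : G → ℂ) =ᵐ[μ]
            tconv μ γ (C (hφp.toLp φ) : G → ℂ) ψ) ↔
    (∀ v : G, ∀ φ : G → ℂ, ∀ hφp : MemLp φ p μ,
        ∀ hρ : MemLp (fun x => γ (x, v⁻¹) * φ (x * v⁻¹)) p μ,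
          (C (hρ.toLp (fun x => γ (x, v⁻¹) * φ (x * v⁻¹))) : G → ℂ) =ᵐ[μ]
            fun x => γ (x, v⁻¹) * (C (hφp.toLp φ) : G → ℂ) (x * v⁻¹)) := by
  have hpt : p ≠ ∞ := (lt_of_le_of_lt hpq hq).ne
  have hqt : q ≠ ∞ := hq.ne
  constructor
  · -- convolution commutation → translation commutation
    intro H1
    have step1 : ∀ Φ : Lp ℂ p μ, Integrable (⇑Φ) μ → ∀ v : G,
        C (Tw μ γ hγcont hγ1 p v Φ) = Tw μ γ hγcont hγ1 q v (C Φ) := by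
      intro Φ hint
      have hucont : Continuous fun y : G => C (Tw μ γ hγcont hγ1 p y Φ) -
          Tw μ γ hγcont hγ1 q y (C Φ) :=
        (C.continuous.comp (Tw_continuous μ γ hγcont hγ1 p hpt Φ)).sub
          (Tw_continuous μ γ hγcont hγ1 q hqt (C Φ))
      have hvan : ∀ ψ : G → ℂ, Integrable ψ μ → MemLp ψ p μ →
          ∫ y, ψ y • (C (Tw μ γ hγcont hγ1 p y Φ) - Tw μ γ hγcont hγ1 q y (C Φ)) ∂μ
            = 0 := by
        intro ψ hψi hψp
        set Ip : Lp ℂ p μ := ∫ y, ψ y • Tw μ γ hγcont hγ1 p y Φ ∂μ with hIp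
        set Iq : Lp ℂ q μ := ∫ y, ψ y • Tw μ γ hγcont hγ1 q y (C Φ) ∂μ with hIq
        have hArep : ⇑Ip =ᵐ[μ] tconv μ γ (⇑Φ) ψ := lemmaA μ γ hγcont hγ1 p hpt Φ hψi
        have hArep' : ⇑Iq =ᵐ[μ] tconv μ γ (⇑(C Φ)) ψ := lemmaA μ γ hγcont hγ1 q hqt (C Φ) hψi
        have hc : MemLp (tconv μ γ (⇑Φ) ψ) p μ := MemLp.ae_eq hArep (Lp.memLp Ip)
        have hH := H1 (⇑Φ) ψ hint (Lp.memLp Φ) hψi hψp hc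
        have h1 : hc.toLp (tconv μ γ (⇑Φ) ψ) = Ip := by
          rw [MemLp.toLp_congr hc (Lp.memLp Ip) hArep.symm, Lp.toLp_coeFn]
        have h2 : (Lp.memLp Φ).toLp ⇑Φ = Φ := Lp.toLp_coeFn _ _
        rw [h1, h2] at hH
        have h3 : C Ip = Iq := Lp.ext (hH.trans hArep'.symm)
        have h4 : C Ip = ∫ y, ψ y • C (Tw μ γ hγcont hγ1 p y Φ) ∂μ := by
          rw [hIp, ← ContinuousLinearMap.integral_comp_comm C
            (w_integrable μ γ hγcont hγ1 p hpt Φ hψi)]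
          exact integral_congr_ae (Filter.Eventually.of_forall fun y => C.map_smul _ _)
        have h5 : Integrable (fun y => ψ y • C (Tw μ γ hγcont hγ1 p y Φ)) μ := by
          refine Integrable.mono' (hψi.norm.mul_const (‖C‖ * ‖Φ‖)) ?_ ?_
          · exact hψi.aestronglyMeasurable.smul
              (C.continuous.comp (Tw_continuous μ γ hγcont hγ1 p hpt Φ)).aestronglyMeasurable
          · refine Filter.Eventually.of_forall fun y => ?_
            rw [norm_smul]
            refine mul_le_mul_of_nonneg_left ?_ (norm_nonneg _)
            calc ‖C (Tw μ γ hγcont hγ1 p y Φ)‖ ≤ ‖C‖ * ‖Tw μ γ hγcont hγ1 p y Φ‖ :=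
                C.le_opNorm _
              _ = ‖C‖ * ‖Φ‖ := by rw [Tw_norm]
        have h6 : Integrable (fun y => ψ y • Tw μ γ hγcont hγ1 q y (C Φ)) μ :=
          w_integrable μ γ hγcont hγ1 q hqt (C Φ) hψi
        have h7 : ∫ y, (ψ y • C (Tw μ γ hγcont hγ1 p y Φ) -
            ψ y • Tw μ γ hγcont hγ1 q y (C Φ)) ∂μ = 0 := by
          rw [integral_sub h5 h6, ← h4, ← hIq, h3, sub_self]
        rw [show (fun y => ψ y • (C (Tw μ γ hγcont hγ1 p y Φ) -
            Tw μ γ hγcont hγ1 q y (C Φ))) = fun y =>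
            ψ y • C (Tw μ γ hγcont hγ1 p y Φ) - ψ y • Tw μ γ hγcont hγ1 q y (C Φ)
          from funext fun y => smul_sub _ _ _]
        exact h7
      intro v
      exact sub_eq_zero.mp (lemmaC μ p hucont hvan v)
    have step2 : ∀ (v : G) (Φ : Lp ℂ p μ),
        C (Tw μ γ hγcont hγ1 p v Φ) = Tw μ γ hγcont hγ1 q v (C Φ) := by
      intro v
      refine Lp.induction hpt
        (fun Φ : Lp ℂ p μ => C (Tw μ γ hγcont hγ1 p v Φ) = Tw μ γ hγcont hγ1 q v (C Φ))
        ?_ ?_ ?_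
      · intro c s hs hμs
        refine step1 _ ?_ v
        have h1 : Integrable (s.indicator fun _ => c) μ := by
          rw [integrable_indicator_iff hs]
          exact integrableOn_const hμs.ne
        refine h1.congr ?_
        rw [Lp.simpleFunc.coe_indicatorConst]
        exact (indicatorConstLp_coeFn).symm
      · intro f g hf hg hdisj Pf Pg
        simp only [Tw_add, map_add, Pf, Pg]
      · exact isClosed_eq
          (C.continuous.comp (Tw_isometry μ γ hγcont hγ1 p v).continuous)
          ((Tw_isometry μ γ hγcont hγ1 q v).continuous.comp C.continuous)
    intro v φ hφp hρ
    have h1 : hρ.toLp _ = Tw μ γ hγcont hγ1 p v (hφp.toLp φ) :=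
      MemLp.toLp_congr _ _ (tau_ae_eq μ γ hγ1 hφp.coeFn_toLp.symm)
    rw [h1, step2 v (hφp.toLp φ)]
    exact Tw_coeFn μ γ hγcont hγ1 q v (C (hφp.toLp φ))
  · -- translation commutation → convolution commutation
    intro H2
    have R2 : ∀ (v : G) (Φ : Lp ℂ p μ),
        C (Tw μ γ hγcont hγ1 p v Φ) = Tw μ γ hγcont hγ1 q v (C Φ) := by
      intro v Φ
      have h := H2 v (⇑Φ) (Lp.memLp Φ) (memℒp_tau μ γ hγcont hγ1 v (Lp.memLp Φ))
      rw [Lp.toLp_coeFn _ _] at h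
      have h1 : (memℒp_tau μ γ hγcont hγ1 v (Lp.memLp Φ)).toLp
          (fun x => γ (x, v⁻¹) * (⇑Φ) (x * v⁻¹)) = Tw μ γ hγcont hγ1 p v Φ := rfl
      rw [h1] at h
      exact Lp.ext (h.trans (Tw_coeFn μ γ hγcont hγ1 q v (C Φ)).symm)
    intro φ ψ hφi hφp hψi hψp hc
    set Φ : Lp ℂ p μ := hφp.toLp φ with hΦ
    have hφae : ⇑Φ =ᵐ[μ] φ := hφp.coeFn_toLp
    set Ip : Lp ℂ p μ := ∫ y, ψ y • Tw μ γ hγcont hγ1 p y Φ ∂μ with hIp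
    have hrepP : ⇑Ip =ᵐ[μ] tconv μ γ (⇑Φ) ψ := lemmaA μ γ hγcont hγ1 p hpt Φ hψi
    have hrepQ : ⇑(∫ y, ψ y • Tw μ γ hγcont hγ1 q y (C Φ) ∂μ) =ᵐ[μ]
        tconv μ γ (⇑(C Φ)) ψ := lemmaA μ γ hγcont hγ1 q hqt (C Φ) hψi
    have hconv : tconv μ γ φ ψ =ᵐ[μ] tconv μ γ (⇑Φ) ψ := tconv_congr_left μ γ hφae.symm
    have h1 : hc.toLp (tconv μ γ φ ψ) = Ip := by
      rw [MemLp.toLp_congr hc (Lp.memLp Ip) (hconv.trans hrepP.symm), Lp.toLp_coeFn]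
    have h2 : C Ip = ∫ y, ψ y • Tw μ γ hγcont hγ1 q y (C Φ) ∂μ := by
      calc C Ip = ∫ y, C (ψ y • Tw μ γ hγcont hγ1 p y Φ) ∂μ :=
          (ContinuousLinearMap.integral_comp_comm C
            (w_integrable μ γ hγcont hγ1 p hpt Φ hψi)).symm
        _ = ∫ y, ψ y • Tw μ γ hγcont hγ1 q y (C Φ) ∂μ := by
          refine integral_congr_ae (Filter.Eventually.of_forall fun y => ?_)
          show C (ψ y • Tw μ γ hγcont hγ1 p y Φ) = ψ y • Tw μ γ hγcont hγ1 q y (C Φ)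
          rw [C.map_smul, R2 y Φ]
    rw [h1, h2]
    exact hrepQ
end

section
/- Let 𝔤 be a Lie algebra over ℝ with a basis X₁, …, X₈ whose Lie brackets of basis elements are: [X₁, X_k] = X_{k+1} for k = 2, …, 7; [X₂, X₃] = X₆ + X₇; [X₂, X₄] = X₇ + X₈; [X₂, X₅] = X₈; and [X_j, X_k] = 0 for all other pairs 1 ≤ j < k ≤ 8. Then 𝔤 is characteristically nilpotent: every derivation D of 𝔤 is a nilpotent linear endomorphism of 𝔤 (in fact D⁸ = 0). -/
set_option maxHeartbeats 4000000 in
/-- The 8-dimensional real Lie algebra with basis `X₁, …, X₈`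
(here `B 0, …, B 7`) and the indicated brackets is characteristically nilpotent:
every derivation `D` is a nilpotent linear endomorphism; in fact `D ^ 8 = 0`. -/
theorem statement15 {L : Type*} [LieRing L] [LieAlgebra ℝ L] (B : Module.Basis (Fin 8) ℝ L)
    (h01 : ⁅B 0, B 1⁆ = B 2) (h02 : ⁅B 0, B 2⁆ = B 3) (h03 : ⁅B 0, B 3⁆ = B 4)
    (h04 : ⁅B 0, B 4⁆ = B 5) (h05 : ⁅B 0, B 5⁆ = B 6) (h06 : ⁅B 0, B 6⁆ = B 7)
    (h07 : ⁅B 0, B 7⁆ = 0)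
    (h12 : ⁅B 1, B 2⁆ = B 5 + B 6) (h13 : ⁅B 1, B 3⁆ = B 6 + B 7) (h14 : ⁅B 1, B 4⁆ = B 7)
    (h15 : ⁅B 1, B 5⁆ = 0) (h16 : ⁅B 1, B 6⁆ = 0) (h17 : ⁅B 1, B 7⁆ = 0)
    (hhigh : ∀ j k : Fin 8, 2 ≤ (j : ℕ) → j < k → ⁅B j, B k⁆ = 0) :
    ∀ D : LieDerivation ℝ L L,
      IsNilpotent (D.toLinearMap : Module.End ℝ L) ∧
      (D.toLinearMap : Module.End ℝ L) ^ 8 = 0 := by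
  intro D
  have t00 : ⁅B 0, B 0⁆ = 0 := lie_self _
  have t10 : ⁅B 1, B 0⁆ = -(B 2) := by rw [← lie_skew, h01]
  have t11 : ⁅B 1, B 1⁆ = 0 := lie_self _
  have t20 : ⁅B 2, B 0⁆ = -(B 3) := by rw [← lie_skew, h02]
  have t21 : ⁅B 2, B 1⁆ = -(B 5 + B 6) := by rw [← lie_skew, h12]
  have t22 : ⁅B 2, B 2⁆ = 0 := lie_self _
  have t23 : ⁅B 2, B 3⁆ = 0 := hhigh 2 3 (by decide) (by decide)
  have t24 : ⁅B 2, B 4⁆ = 0 := hhigh 2 4 (by decide) (by decide)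
  have t25 : ⁅B 2, B 5⁆ = 0 := hhigh 2 5 (by decide) (by decide)
  have t26 : ⁅B 2, B 6⁆ = 0 := hhigh 2 6 (by decide) (by decide)
  have t27 : ⁅B 2, B 7⁆ = 0 := hhigh 2 7 (by decide) (by decide)
  have t30 : ⁅B 3, B 0⁆ = -(B 4) := by rw [← lie_skew, h03]
  have t31 : ⁅B 3, B 1⁆ = -(B 6 + B 7) := by rw [← lie_skew, h13]
  have t32 : ⁅B 3, B 2⁆ = 0 := by rw [← lie_skew, t23, neg_zero]
  have t33 : ⁅B 3, B 3⁆ = 0 := lie_self _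
  have t34 : ⁅B 3, B 4⁆ = 0 := hhigh 3 4 (by decide) (by decide)
  have t35 : ⁅B 3, B 5⁆ = 0 := hhigh 3 5 (by decide) (by decide)
  have t36 : ⁅B 3, B 6⁆ = 0 := hhigh 3 6 (by decide) (by decide)
  have t37 : ⁅B 3, B 7⁆ = 0 := hhigh 3 7 (by decide) (by decide)
  have t40 : ⁅B 4, B 0⁆ = -(B 5) := by rw [← lie_skew, h04]
  have t41 : ⁅B 4, B 1⁆ = -(B 7) := by rw [← lie_skew, h14]
  have t42 : ⁅B 4, B 2⁆ = 0 := by rw [← lie_skew, t24, neg_zero]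
  have t43 : ⁅B 4, B 3⁆ = 0 := by rw [← lie_skew, t34, neg_zero]
  have t44 : ⁅B 4, B 4⁆ = 0 := lie_self _
  have t45 : ⁅B 4, B 5⁆ = 0 := hhigh 4 5 (by decide) (by decide)
  have t46 : ⁅B 4, B 6⁆ = 0 := hhigh 4 6 (by decide) (by decide)
  have t47 : ⁅B 4, B 7⁆ = 0 := hhigh 4 7 (by decide) (by decide)
  have t50 : ⁅B 5, B 0⁆ = -(B 6) := by rw [← lie_skew, h05]
  have t51 : ⁅B 5, B 1⁆ = 0 := by rw [← lie_skew, h15, neg_zero]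
  have t52 : ⁅B 5, B 2⁆ = 0 := by rw [← lie_skew, t25, neg_zero]
  have t53 : ⁅B 5, B 3⁆ = 0 := by rw [← lie_skew, t35, neg_zero]
  have t54 : ⁅B 5, B 4⁆ = 0 := by rw [← lie_skew, t45, neg_zero]
  have t55 : ⁅B 5, B 5⁆ = 0 := lie_self _
  have t56 : ⁅B 5, B 6⁆ = 0 := hhigh 5 6 (by decide) (by decide)
  have t57 : ⁅B 5, B 7⁆ = 0 := hhigh 5 7 (by decide) (by decide)
  have t60 : ⁅B 6, B 0⁆ = -(B 7) := by rw [← lie_skew, h06]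
  have t61 : ⁅B 6, B 1⁆ = 0 := by rw [← lie_skew, h16, neg_zero]
  have t62 : ⁅B 6, B 2⁆ = 0 := by rw [← lie_skew, t26, neg_zero]
  have t63 : ⁅B 6, B 3⁆ = 0 := by rw [← lie_skew, t36, neg_zero]
  have t64 : ⁅B 6, B 4⁆ = 0 := by rw [← lie_skew, t46, neg_zero]
  have t65 : ⁅B 6, B 5⁆ = 0 := by rw [← lie_skew, t56, neg_zero]
  have t66 : ⁅B 6, B 6⁆ = 0 := lie_self _
  have t67 : ⁅B 6, B 7⁆ = 0 := hhigh 6 7 (by decide) (by decide)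
  have t70 : ⁅B 7, B 0⁆ = 0 := by rw [← lie_skew, h07, neg_zero]
  have t71 : ⁅B 7, B 1⁆ = 0 := by rw [← lie_skew, h17, neg_zero]
  have t72 : ⁅B 7, B 2⁆ = 0 := by rw [← lie_skew, t27, neg_zero]
  have t73 : ⁅B 7, B 3⁆ = 0 := by rw [← lie_skew, t37, neg_zero]
  have t74 : ⁅B 7, B 4⁆ = 0 := by rw [← lie_skew, t47, neg_zero]
  have t75 : ⁅B 7, B 5⁆ = 0 := by rw [← lie_skew, t57, neg_zero]
  have t76 : ⁅B 7, B 6⁆ = 0 := by rw [← lie_skew, t67, neg_zero]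
  have t77 : ⁅B 7, B 7⁆ = 0 := lie_self _
  obtain ⟨a, ha⟩ : ∃ a : Fin 8 → Fin 8 → ℝ, ∀ i : Fin 8, D (B i) = a i 0 • B 0 + a i 1 • B 1 + a i 2 • B 2 + a i 3 • B 3 + a i 4 • B 4 + a i 5 • B 5 + a i 6 • B 6 + a i 7 • B 7 :=
    ⟨fun i j => B.repr (D (B i)) j, fun i => by
      have h := (B.sum_repr (D (B i))).symm; rw [Fin.sum_univ_eight] at h; exact h⟩
  have hp01 := D.apply_lie_eq_add (B 0) (B 1)
  simp only [t00, h01, h02, h03, h04, h05, h06, h07, t10, t11, h12, h13, h14, h15, h16, h17, t20, t21, t22, t23, t24, t25, t26, t27, t30, t31, t32, t33, t34, t35, t36, t37, t40, t41, t42, t43, t44, t45, t46, t47, t50, t51, t52, t53, t54, t55, t56, t57, t60, t61, t62, t63, t64, t65, t66, t67, t70, t71, t72, t73, t74, t75, t76, t77, map_add, map_zero, ha, lie_add, add_lie, lie_smul, smul_lie,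
    smul_add, smul_neg, smul_zero, add_zero, zero_add, neg_zero] at hp01
  have e011 := congrArg (fun z : L => B.repr z 1) hp01
  simp [Finsupp.single_apply] at e011
  have e012 := congrArg (fun z : L => B.repr z 2) hp01
  simp [Finsupp.single_apply] at e012
  have hp02 := D.apply_lie_eq_add (B 0) (B 2)
  simp only [t00, h01, h02, h03, h04, h05, h06, h07, t10, t11, h12, h13, h14, h15, h16, h17, t20, t21, t22, t23, t24, t25, t26, t27, t30, t31, t32, t33, t34, t35, t36, t37, t40, t41, t42, t43, t44, t45, t46, t47, t50, t51, t52, t53, t54, t55, t56, t57, t60, t61, t62, t63, t64, t65, t66, t67, t70, t71, t72, t73, t74, t75, t76, t77, map_add, map_zero, ha, lie_add, add_lie, lie_smul, smul_lie,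
    smul_add, smul_neg, smul_zero, add_zero, zero_add, neg_zero] at hp02
  have e020 := congrArg (fun z : L => B.repr z 0) hp02
  simp [Finsupp.single_apply] at e020
  have e022 := congrArg (fun z : L => B.repr z 2) hp02
  simp [Finsupp.single_apply] at e022
  have e023 := congrArg (fun z : L => B.repr z 3) hp02
  simp [Finsupp.single_apply] at e023
  have e024 := congrArg (fun z : L => B.repr z 4) hp02
  simp [Finsupp.single_apply] at e024
  have hp03 := D.apply_lie_eq_add (B 0) (B 3)
  simp only [t00, h01, h02, h03, h04, h05, h06, h07, t10, t11, h12, h13, h14, h15, h16, h17, t20, t21, t22, t23, t24, t25, t26, t27, t30, t31, t32, t33, t34, t35, t36, t37, t40, t41, t42, t43, t44, t45, t46, t47, t50, t51, t52, t53, t54, t55, t56, t57, t60, t61, t62, t63, t64, t65, t66, t67, t70, t71, t72, t73, t74, t75, t76, t77, map_add, map_zero, ha, lie_add, add_lie, lie_smul, smul_lie,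
    smul_add, smul_neg, smul_zero, add_zero, zero_add, neg_zero] at hp03
  have e030 := congrArg (fun z : L => B.repr z 0) hp03
  simp [Finsupp.single_apply] at e030
  have e032 := congrArg (fun z : L => B.repr z 2) hp03
  simp [Finsupp.single_apply] at e032
  have e033 := congrArg (fun z : L => B.repr z 3) hp03
  simp [Finsupp.single_apply] at e033
  have e034 := congrArg (fun z : L => B.repr z 4) hp03
  simp [Finsupp.single_apply] at e034
  have e035 := congrArg (fun z : L => B.repr z 5) hp03
  simp [Finsupp.single_apply] at e035
  have hp04 := D.apply_lie_eq_add (B 0) (B 4)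
  simp only [t00, h01, h02, h03, h04, h05, h06, h07, t10, t11, h12, h13, h14, h15, h16, h17, t20, t21, t22, t23, t24, t25, t26, t27, t30, t31, t32, t33, t34, t35, t36, t37, t40, t41, t42, t43, t44, t45, t46, t47, t50, t51, t52, t53, t54, t55, t56, t57, t60, t61, t62, t63, t64, t65, t66, t67, t70, t71, t72, t73, t74, t75, t76, t77, map_add, map_zero, ha, lie_add, add_lie, lie_smul, smul_lie,
    smul_add, smul_neg, smul_zero, add_zero, zero_add, neg_zero] at hp04
  have e040 := congrArg (fun z : L => B.repr z 0) hp04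
  simp [Finsupp.single_apply] at e040
  have e041 := congrArg (fun z : L => B.repr z 1) hp04
  simp [Finsupp.single_apply] at e041
  have e042 := congrArg (fun z : L => B.repr z 2) hp04
  simp [Finsupp.single_apply] at e042
  have e043 := congrArg (fun z : L => B.repr z 3) hp04
  simp [Finsupp.single_apply] at e043
  have e044 := congrArg (fun z : L => B.repr z 4) hp04
  simp [Finsupp.single_apply] at e044
  have e045 := congrArg (fun z : L => B.repr z 5) hp04
  simp [Finsupp.single_apply] at e045
  have e046 := congrArg (fun z : L => B.repr z 6) hp04
  simp [Finsupp.single_apply] at e046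
  have hp05 := D.apply_lie_eq_add (B 0) (B 5)
  simp only [t00, h01, h02, h03, h04, h05, h06, h07, t10, t11, h12, h13, h14, h15, h16, h17, t20, t21, t22, t23, t24, t25, t26, t27, t30, t31, t32, t33, t34, t35, t36, t37, t40, t41, t42, t43, t44, t45, t46, t47, t50, t51, t52, t53, t54, t55, t56, t57, t60, t61, t62, t63, t64, t65, t66, t67, t70, t71, t72, t73, t74, t75, t76, t77, map_add, map_zero, ha, lie_add, add_lie, lie_smul, smul_lie,
    smul_add, smul_neg, smul_zero, add_zero, zero_add, neg_zero] at hp05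
  have e050 := congrArg (fun z : L => B.repr z 0) hp05
  simp [Finsupp.single_apply] at e050
  have e051 := congrArg (fun z : L => B.repr z 1) hp05
  simp [Finsupp.single_apply] at e051
  have e052 := congrArg (fun z : L => B.repr z 2) hp05
  simp [Finsupp.single_apply] at e052
  have e053 := congrArg (fun z : L => B.repr z 3) hp05
  simp [Finsupp.single_apply] at e053
  have e054 := congrArg (fun z : L => B.repr z 4) hp05
  simp [Finsupp.single_apply] at e054
  have e055 := congrArg (fun z : L => B.repr z 5) hp05
  simp [Finsupp.single_apply] at e055
  have e056 := congrArg (fun z : L => B.repr z 6) hp05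
  simp [Finsupp.single_apply] at e056
  have hp06 := D.apply_lie_eq_add (B 0) (B 6)
  simp only [t00, h01, h02, h03, h04, h05, h06, h07, t10, t11, h12, h13, h14, h15, h16, h17, t20, t21, t22, t23, t24, t25, t26, t27, t30, t31, t32, t33, t34, t35, t36, t37, t40, t41, t42, t43, t44, t45, t46, t47, t50, t51, t52, t53, t54, t55, t56, t57, t60, t61, t62, t63, t64, t65, t66, t67, t70, t71, t72, t73, t74, t75, t76, t77, map_add, map_zero, ha, lie_add, add_lie, lie_smul, smul_lie,
    smul_add, smul_neg, smul_zero, add_zero, zero_add, neg_zero] at hp06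
  have e060 := congrArg (fun z : L => B.repr z 0) hp06
  simp [Finsupp.single_apply] at e060
  have e061 := congrArg (fun z : L => B.repr z 1) hp06
  simp [Finsupp.single_apply] at e061
  have e062 := congrArg (fun z : L => B.repr z 2) hp06
  simp [Finsupp.single_apply] at e062
  have e064 := congrArg (fun z : L => B.repr z 4) hp06
  simp [Finsupp.single_apply] at e064
  have e065 := congrArg (fun z : L => B.repr z 5) hp06
  simp [Finsupp.single_apply] at e065
  have e066 := congrArg (fun z : L => B.repr z 6) hp06
  simp [Finsupp.single_apply] at e066
  have e067 := congrArg (fun z : L => B.repr z 7) hp06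
  simp [Finsupp.single_apply] at e067
  have hp07 := D.apply_lie_eq_add (B 0) (B 7)
  simp only [t00, h01, h02, h03, h04, h05, h06, h07, t10, t11, h12, h13, h14, h15, h16, h17, t20, t21, t22, t23, t24, t25, t26, t27, t30, t31, t32, t33, t34, t35, t36, t37, t40, t41, t42, t43, t44, t45, t46, t47, t50, t51, t52, t53, t54, t55, t56, t57, t60, t61, t62, t63, t64, t65, t66, t67, t70, t71, t72, t73, t74, t75, t76, t77, map_add, map_zero, ha, lie_add, add_lie, lie_smul, smul_lie,
    smul_add, smul_neg, smul_zero, add_zero, zero_add, neg_zero] at hp07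
  have e074 := congrArg (fun z : L => B.repr z 4) hp07
  simp [Finsupp.single_apply] at e074
  have e075 := congrArg (fun z : L => B.repr z 5) hp07
  simp [Finsupp.single_apply] at e075
  have e076 := congrArg (fun z : L => B.repr z 6) hp07
  simp [Finsupp.single_apply] at e076
  have hp12 := D.apply_lie_eq_add (B 1) (B 2)
  simp only [t00, h01, h02, h03, h04, h05, h06, h07, t10, t11, h12, h13, h14, h15, h16, h17, t20, t21, t22, t23, t24, t25, t26, t27, t30, t31, t32, t33, t34, t35, t36, t37, t40, t41, t42, t43, t44, t45, t46, t47, t50, t51, t52, t53, t54, t55, t56, t57, t60, t61, t62, t63, t64, t65, t66, t67, t70, t71, t72, t73, t74, t75, t76, t77, map_add, map_zero, ha, lie_add, add_lie, lie_smul, smul_lie,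
    smul_add, smul_neg, smul_zero, add_zero, zero_add, neg_zero] at hp12
  have e122 := congrArg (fun z : L => B.repr z 2) hp12
  simp [Finsupp.single_apply] at e122
  have e123 := congrArg (fun z : L => B.repr z 3) hp12
  simp [Finsupp.single_apply] at e123
  have e125 := congrArg (fun z : L => B.repr z 5) hp12
  simp [Finsupp.single_apply] at e125
  have e126 := congrArg (fun z : L => B.repr z 6) hp12
  simp [Finsupp.single_apply] at e126
  have z00 : a 0 0 = 0 := by linarith [e011, e022, e024, e033, e035, e044, e046, e055, e056, e125, e126]
  have z10 : a 1 0 = 0 := by linarith [e054, e064, e065, e075, e076, e123]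
  have z11 : a 1 1 = 0 := by linarith [e011, e022, e023, e024, e033, e034, e035, e044, e045, e046, e055, e056, e125, e126]
  have z20 : a 2 0 = 0 := by linarith [e041, e052, e053, e064, e075, e122]
  have z21 : a 2 1 = 0 := by linarith [e011]
  have z22 : a 2 2 = 0 := by linarith [e011, e012, e022, e023, e024, e033, e034, e035, e044, e045, e046, e055, e056, e125, e126]
  have z30 : a 3 0 = 0 := by linarith [e020]
  have z31 : a 3 1 = 0 := by linarith [e032, e043, e054, e065, e076]
  have z32 : a 3 2 = 0 := by linarith [e011, e022]
  have z33 : a 3 3 = 0 := by linarith [e011, e012, e022, e023, e024, e033, e034, e035, e044, e045, e046, e055, e056, e125, e126]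
  have z40 : a 4 0 = 0 := by linarith [e030]
  have z41 : a 4 1 = 0 := by linarith [e042, e053, e064, e075]
  have z42 : a 4 2 = 0 := by linarith [e043, e054, e065, e076]
  have z43 : a 4 3 = 0 := by linarith [e011, e022, e033]
  have z44 : a 4 4 = 0 := by linarith [e011, e012, e022, e023, e024, e033, e034, e035, e044, e045, e046, e055, e056, e125, e126]
  have z50 : a 5 0 = 0 := by linarith [e040]
  have z51 : a 5 1 = 0 := by linarith [e041]
  have z52 : a 5 2 = 0 := by linarith [e053, e064, e075]
  have z53 : a 5 3 = 0 := by linarith [e054, e065, e076]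
  have z54 : a 5 4 = 0 := by linarith [e011, e022, e033, e044]
  have z55 : a 5 5 = 0 := by linarith [e011, e012, e022, e023, e024, e033, e034, e035, e044, e045, e046, e055, e056, e125, e126]
  have z60 : a 6 0 = 0 := by linarith [e050]
  have z61 : a 6 1 = 0 := by linarith [e051]
  have z62 : a 6 2 = 0 := by linarith [e041, e052]
  have z63 : a 6 3 = 0 := by linarith [e064, e075]
  have z64 : a 6 4 = 0 := by linarith [e065, e076]
  have z65 : a 6 5 = 0 := by linarith [e011, e022, e033, e044, e055]
  have z66 : a 6 6 = 0 := by linarith [e011, e012, e022, e023, e024, e033, e034, e035, e044, e045, e046, e055, e056, e125, e126]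
  have z70 : a 7 0 = 0 := by linarith [e060]
  have z71 : a 7 1 = 0 := by linarith [e061]
  have z72 : a 7 2 = 0 := by linarith [e051, e062]
  have z73 : a 7 3 = 0 := by linarith [e074]
  have z74 : a 7 4 = 0 := by linarith [e075]
  have z75 : a 7 5 = 0 := by linarith [e076]
  have z76 : a 7 6 = 0 := by linarith [e011, e022, e033, e044, e055, e066]
  have z77 : a 7 7 = 0 := by linarith [e011, e012, e022, e023, e024, e033, e034, e035, e044, e045, e046, e055, e056, e067, e125, e126]
  set V : ℕ → Submodule ℝ L := fun k => Submodule.span ℝ (B '' {j : Fin 8 | k ≤ (j : ℕ)}) with hVdef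
  have mem : ∀ (k : ℕ) (j : Fin 8), k ≤ (j : ℕ) → B j ∈ V k :=
    fun k j h => Submodule.subset_span ⟨j, h, rfl⟩
  have Vmono : ∀ {p q : ℕ}, p ≤ q → V q ≤ V p :=
    fun h => Submodule.span_mono (Set.image_mono fun m hm => le_trans h hm)
  have key0 : D (B 0) ∈ V 1 := by
    rw [ha 0, z00]
    simp only [zero_smul, zero_add, add_zero]
    exact (Submodule.add_mem _ (Submodule.add_mem _ (Submodule.add_mem _ (Submodule.add_mem _ (Submodule.add_mem _ (Submodule.add_mem _ (Submodule.smul_mem _ _ (mem 1 1 (by decide))) (Submodule.smul_mem _ _ (mem 1 2 (by decide)))) (Submodule.smul_mem _ _ (mem 1 3 (by decide)))) (Submodule.smul_mem _ _ (mem 1 4 (by decide)))) (Submodule.smul_mem _ _ (mem 1 5 (by decide)))) (Submodule.smul_mem _ _ (mem 1 6 (by decide)))) (Submodule.smul_mem _ _ (mem 1 7 (by decide))))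
  have key1 : D (B 1) ∈ V 2 := by
    rw [ha 1, z10, z11]
    simp only [zero_smul, zero_add, add_zero]
    exact (Submodule.add_mem _ (Submodule.add_mem _ (Submodule.add_mem _ (Submodule.add_mem _ (Submodule.add_mem _ (Submodule.smul_mem _ _ (mem 2 2 (by decide))) (Submodule.smul_mem _ _ (mem 2 3 (by decide)))) (Submodule.smul_mem _ _ (mem 2 4 (by decide)))) (Submodule.smul_mem _ _ (mem 2 5 (by decide)))) (Submodule.smul_mem _ _ (mem 2 6 (by decide)))) (Submodule.smul_mem _ _ (mem 2 7 (by decide))))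
  have key2 : D (B 2) ∈ V 3 := by
    rw [ha 2, z20, z21, z22]
    simp only [zero_smul, zero_add, add_zero]
    exact (Submodule.add_mem _ (Submodule.add_mem _ (Submodule.add_mem _ (Submodule.add_mem _ (Submodule.smul_mem _ _ (mem 3 3 (by decide))) (Submodule.smul_mem _ _ (mem 3 4 (by decide)))) (Submodule.smul_mem _ _ (mem 3 5 (by decide)))) (Submodule.smul_mem _ _ (mem 3 6 (by decide)))) (Submodule.smul_mem _ _ (mem 3 7 (by decide))))
  have key3 : D (B 3) ∈ V 4 := by
    rw [ha 3, z30, z31, z32, z33]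
    simp only [zero_smul, zero_add, add_zero]
    exact (Submodule.add_mem _ (Submodule.add_mem _ (Submodule.add_mem _ (Submodule.smul_mem _ _ (mem 4 4 (by decide))) (Submodule.smul_mem _ _ (mem 4 5 (by decide)))) (Submodule.smul_mem _ _ (mem 4 6 (by decide)))) (Submodule.smul_mem _ _ (mem 4 7 (by decide))))
  have key4 : D (B 4) ∈ V 5 := by
    rw [ha 4, z40, z41, z42, z43, z44]
    simp only [zero_smul, zero_add, add_zero]
    exact (Submodule.add_mem _ (Submodule.add_mem _ (Submodule.smul_mem _ _ (mem 5 5 (by decide))) (Submodule.smul_mem _ _ (mem 5 6 (by decide)))) (Submodule.smul_mem _ _ (mem 5 7 (by decide))))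
  have key5 : D (B 5) ∈ V 6 := by
    rw [ha 5, z50, z51, z52, z53, z54, z55]
    simp only [zero_smul, zero_add, add_zero]
    exact (Submodule.add_mem _ (Submodule.smul_mem _ _ (mem 6 6 (by decide))) (Submodule.smul_mem _ _ (mem 6 7 (by decide))))
  have key6 : D (B 6) ∈ V 7 := by
    rw [ha 6, z60, z61, z62, z63, z64, z65, z66]
    simp only [zero_smul, zero_add, add_zero]
    exact (Submodule.smul_mem _ _ (mem 7 7 (by decide)))
  have key7 : D (B 7) ∈ V 8 := by
    rw [ha 7, z70, z71, z72, z73, z74, z75, z76, z77]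
    simp only [zero_smul, zero_add, add_zero]
    exact zero_mem _
  have key : ∀ j : Fin 8, D (B j) ∈ V ((j : ℕ) + 1) := by
    intro j
    fin_cases j
    · exact key0
    · exact key1
    · exact key2
    · exact key3
    · exact key4
    · exact key5
    · exact key6
    · exact key7
  have hstep : ∀ (k : ℕ) (x : L), x ∈ V k → D x ∈ V (k + 1) := by
    intro k x hx
    induction hx using Submodule.span_induction with
    | mem y hy =>
      obtain ⟨j, hj, rfl⟩ := hy
      exact Vmono (Nat.succ_le_succ hj) (key j)
    | zero => simp only [map_zero]; exact zero_mem (V (k+1))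
    | add u v hu hv hu' hv' => rw [map_add]; exact add_mem hu' hv'
    | smul r u hu hu' => rw [map_smul]; exact Submodule.smul_mem _ _ hu'
  have hV8 : V 8 = ⊥ := by
    have : {j : Fin 8 | 8 ≤ (j : ℕ)} = ∅ := by
      ext j; simp [Nat.not_le.mpr j.isLt]
    rw [hVdef]
    simp [this]
  have hD8 : (D.toLinearMap : Module.End ℝ L) ^ 8 = 0 := by
    apply B.ext
    intro i
    have h0 : (B i : L) ∈ V 0 := mem 0 i (Nat.zero_le _)
    have h8 : D (D (D (D (D (D (D (D (B i)))))))) ∈ V 8 :=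
      hstep 7 _ (hstep 6 _ (hstep 5 _ (hstep 4 _ (hstep 3 _ (hstep 2 _ (hstep 1 _ (hstep 0 _ h0)))))))
    rw [hV8, Submodule.mem_bot] at h8
    simpa [pow_succ, Module.End.mul_apply] using h8
  exact ⟨⟨8, hD8⟩, hD8⟩
end

section
/- Let 𝔤 be a Lie algebra over ℝ with a basis X₁, …, X₈ whose Lie brackets of basis elements are: [X₁, X_k] = X_{k+1} for k = 2, …, 7; [X₂, X₃] = X₆ + X₇; [X₂, X₄] = X₇ + X₈; [X₂, X₅] = X₈; and [X_j, X_k] = 0 for all other pairs 1 ≤ j < k ≤ 8. Then the center of 𝔤, i.e. {x ∈ 𝔤 : [x, y] = 0 for all y ∈ 𝔤}, equals the one-dimensional subspace ℝ·X₈ spanned by X₈. -/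
/-- The center of the 8-dimensional real Lie algebra with basis
`X₁, …, X₈` (here `B 0, …, B 7`) and the indicated brackets is the one-dimensional
subspace spanned by `X₈ = B 7`. -/
theorem statement18 {L : Type*} [LieRing L] [LieAlgebra ℝ L] (B : Module.Basis (Fin 8) ℝ L)
    (h01 : ⁅B 0, B 1⁆ = B 2) (h02 : ⁅B 0, B 2⁆ = B 3) (h03 : ⁅B 0, B 3⁆ = B 4)
    (h04 : ⁅B 0, B 4⁆ = B 5) (h05 : ⁅B 0, B 5⁆ = B 6) (h06 : ⁅B 0, B 6⁆ = B 7)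
    (h07 : ⁅B 0, B 7⁆ = 0)
    (h12 : ⁅B 1, B 2⁆ = B 5 + B 6) (h13 : ⁅B 1, B 3⁆ = B 6 + B 7) (h14 : ⁅B 1, B 4⁆ = B 7)
    (h15 : ⁅B 1, B 5⁆ = 0) (h16 : ⁅B 1, B 6⁆ = 0) (h17 : ⁅B 1, B 7⁆ = 0)
    (hhigh : ∀ j k : Fin 8, 2 ≤ (j : ℕ) → j < k → ⁅B j, B k⁆ = 0) :
    ∀ x : L, (∀ y : L, ⁅x, y⁆ = 0) ↔ x ∈ Submodule.span ℝ ({B 7} : Set L) := by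
  have e10 : ⁅B 1, B 0⁆ = -B 2 := by rw [← lie_skew, h01]
  have e20 : ⁅B 2, B 0⁆ = -B 3 := by rw [← lie_skew, h02]
  have e30 : ⁅B 3, B 0⁆ = -B 4 := by rw [← lie_skew, h03]
  have e40 : ⁅B 4, B 0⁆ = -B 5 := by rw [← lie_skew, h04]
  have e50 : ⁅B 5, B 0⁆ = -B 6 := by rw [← lie_skew, h05]
  have e60 : ⁅B 6, B 0⁆ = -B 7 := by rw [← lie_skew, h06]
  have e70 : ⁅B 7, B 0⁆ = 0 := by rw [← lie_skew, h07, neg_zero]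
  have e21 : ⁅B 2, B 1⁆ = -(B 5 + B 6) := by rw [← lie_skew, h12]
  have e31 : ⁅B 3, B 1⁆ = -(B 6 + B 7) := by rw [← lie_skew, h13]
  have e41 : ⁅B 4, B 1⁆ = -B 7 := by rw [← lie_skew, h14]
  have e51 : ⁅B 5, B 1⁆ = 0 := by rw [← lie_skew, h15, neg_zero]
  have e61 : ⁅B 6, B 1⁆ = 0 := by rw [← lie_skew, h16, neg_zero]
  have e71 : ⁅B 7, B 1⁆ = 0 := by rw [← lie_skew, h17, neg_zero]
  have hB7 : ∀ i : Fin 8, ⁅B 7, B i⁆ = 0 := by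
    intro i
    fin_cases i
    · exact e70
    · exact e71
    · rw [← lie_skew, hhigh _ 7 (by norm_num) (by decide), neg_zero]
    · rw [← lie_skew, hhigh _ 7 (by norm_num) (by decide), neg_zero]
    · rw [← lie_skew, hhigh _ 7 (by norm_num) (by decide), neg_zero]
    · rw [← lie_skew, hhigh _ 7 (by norm_num) (by decide), neg_zero]
    · rw [← lie_skew, hhigh _ 7 (by norm_num) (by decide), neg_zero]
    · exact lie_self _
  intro x
  constructor
  · intro hx
    have hx0 := hx (B 0)
    have hx1 := hx (B 1)
    have hxr : x = ∑ i, B.repr x i • B i := (B.sum_repr x).symm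
    rw [hxr, Fin.sum_univ_eight] at hx0 hx1
    simp only [add_lie, smul_lie, e10, e20, e30, e40, e50, e60, e70, lie_self,
      e21, e31, e41, e51, e61, e71, h01] at hx0 hx1
    -- extract coefficients
    have key : ∀ j : Fin 8, j ≠ 7 → B.repr x j = 0 := by
      intro j hj
      have H0 := congrArg (fun v => B.repr v) hx0
      have H1 := congrArg (fun v => B.repr v) hx1
      simp only [map_add, map_smul, map_neg, map_zero, Module.Basis.repr_self, smul_zero] at H0 H1
      fin_cases j
      · have A := DFunLike.congr_fun H1 (2 : Fin 8)
        simpa [Finsupp.single_apply] using A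
      · have A := DFunLike.congr_fun H0 (2 : Fin 8)
        simpa [Finsupp.single_apply] using A
      · have A := DFunLike.congr_fun H0 (3 : Fin 8)
        simpa [Finsupp.single_apply] using A
      · have A := DFunLike.congr_fun H0 (4 : Fin 8)
        simpa [Finsupp.single_apply] using A
      · have A := DFunLike.congr_fun H0 (5 : Fin 8)
        simpa [Finsupp.single_apply] using A
      · have A := DFunLike.congr_fun H0 (6 : Fin 8)
        simpa [Finsupp.single_apply] using A
      · have A := DFunLike.congr_fun H0 (7 : Fin 8)
        simpa [Finsupp.single_apply] using A
      · exact absurd rfl hj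
    have : x = B.repr x (7 : Fin 8) • B 7 := by
      conv_lhs => rw [hxr, Fin.sum_univ_eight]
      rw [key 0 (by decide), key 1 (by decide), key 2 (by decide), key 3 (by decide),
        key 4 (by decide), key 5 (by decide), key 6 (by decide)]
      simp
    rw [this]
    exact Submodule.smul_mem _ _ (Submodule.mem_span_singleton_self _)
  · intro hxm
    obtain ⟨r, rfl⟩ := Submodule.mem_span_singleton.mp hxm
    intro y
    have hyr : y = ∑ i, B.repr y i • B i := (B.sum_repr y).symm
    rw [hyr, Fin.sum_univ_eight]
    simp [lie_add, lie_smul, smul_lie, hB7]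
end
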